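/- arXiv:2101.00799 — 12 statements merged into one kernel-verified Lean document; each statement's English description precedes it below -/
import Mathlib

section
/- Let A, C, μ ∈ ℝ and σ, σ_W > 0. On the product probability space Ω = ℝ × ℝ equipped with the product measure (gaussianReal μ σ²) ⊗ (gaussianReal 0 σ_W²), let M(m,w) = m, W(m,w) = w and Y = A·M + C + W. Then the conditional expectation of M given the σ-algebra generated by Y equals K·Y + L almost everywhere, where K = Aσ²/(A²σ² + σ_W²) and L = (σ_W²μ − ACσ²)/(A²σ² + σ_W²). -/
open MeasureTheory ProbabilityTheory Real
open scoped NNReal ENNReal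

lemma gauss_withDensity (c : ℝ) {v : ℝ≥0} (hv : v ≠ 0) :
    gaussianReal c v = volume.withDensity (fun x => ((gaussianPDFReal c v x).toNNReal : ℝ≥0∞)) := by
  rw [gaussianReal_of_var_ne_zero c hv]
  rfl

lemma integral_gauss (c : ℝ) {v : ℝ≥0} (hv : v ≠ 0) (f : ℝ → ℝ) :
    ∫ x, f x ∂(gaussianReal c v) = ∫ x, gaussianPDFReal c v x * f x := by
  rw [gauss_withDensity c hv,
    integral_withDensity_eq_integral_smul ((measurable_gaussianPDFReal c v).real_toNNReal) f]
  refine integral_congr_ae (Filter.Eventually.of_forall fun x => ?_)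
  simp [NNReal.smul_def, Real.coe_toNNReal _ (gaussianPDFReal_nonneg c v x)]

lemma integrable_gauss_iff (c : ℝ) {v : ℝ≥0} (hv : v ≠ 0) (f : ℝ → ℝ) :
    Integrable f (gaussianReal c v) ↔ Integrable (fun x => gaussianPDFReal c v x * f x) := by
  rw [gauss_withDensity c hv,
    integrable_withDensity_iff_integrable_smul ((measurable_gaussianPDFReal c v).real_toNNReal)]
  constructor <;> intro h <;> refine h.congr (Filter.Eventually.of_forall fun x => ?_) <;>
    simp [NNReal.smul_def, Real.coe_toNNReal _ (gaussianPDFReal_nonneg c v x)]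

lemma integrable_affine_gauss (c : ℝ) {v : ℝ≥0} (hv : v ≠ 0) (a b : ℝ) :
    Integrable (fun x => (a + b * x) * gaussianPDFReal c v x) := by
  have hvpos : (0 : ℝ) < v := by positivity
  have hb : (0:ℝ) < 1 / (2 * v) := by positivity
  have h0 : ∀ a' b' : ℝ, Integrable (fun x => (a' + b' * x) * gaussianPDFReal 0 v x) := by
    intro a' b'
    have : (fun x => (a' + b' * x) * gaussianPDFReal 0 v x)
        = fun x => (√(2 * Real.pi * v))⁻¹ *
            (a' * Real.exp (-(1/(2*v)) * x ^ 2) + b' * (x * Real.exp (-(1/(2*v)) * x ^ 2))) := by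
      funext x
      rw [gaussianPDFReal]
      have : -(x - 0) ^ 2 / (2 * v) = -(1/(2*v)) * x ^ 2 := by
        field_simp
        ring
      rw [this]; ring
    rw [this]
    exact ((((integrable_exp_neg_mul_sq hb).const_mul a')).add
      ((integrable_mul_exp_neg_mul_sq hb).const_mul b')).const_mul _
  have hg : Integrable (fun t => ((a + b * c) + b * t) * gaussianPDFReal 0 v t) := h0 _ _
  have := hg.comp_sub_right c
  refine this.congr (Filter.Eventually.of_forall fun x => ?_)
  simp only [gaussianPDFReal_sub, zero_add]
  ring


lemma integral_id_gauss0 {v : ℝ≥0} : ∫ x, x * gaussianPDFReal 0 v x = 0 := by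
  have hodd : ∀ x : ℝ, (-x) * gaussianPDFReal 0 v (-x) = -(x * gaussianPDFReal 0 v x) := by
    intro x
    have : gaussianPDFReal 0 v (-x) = gaussianPDFReal 0 v x := by
      rw [gaussianPDFReal, gaussianPDFReal]
      ring_nf
    rw [this]; ring
  have h := integral_neg_eq_self (fun x => x * gaussianPDFReal 0 v x) (volume : Measure ℝ)
  simp only [hodd, integral_neg] at h
  linarith

lemma integral_affine_gauss (c : ℝ) {v : ℝ≥0} (hv : v ≠ 0) (a b : ℝ) :
    ∫ x, (a + b * x) * gaussianPDFReal c v x = a + b * c := by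
  have key : (fun x => (a + b * x) * gaussianPDFReal c v x)
      = fun x => ((fun t => ((a + b * c) + b * t) * gaussianPDFReal 0 v t) (x - c)) := by
    funext x
    simp only [gaussianPDFReal_sub, zero_add]
    ring
  rw [key, integral_sub_right_eq_self (fun t => ((a + b * c) + b * t) * gaussianPDFReal 0 v t) c]
  have h1 : Integrable (fun t => (a + b * c) * gaussianPDFReal 0 v t) :=
    (integrable_gaussianPDFReal 0 v).const_mul _
  have h2 : Integrable (fun t => b * (t * gaussianPDFReal 0 v t)) := by
    have := integrable_affine_gauss 0 hv 0 1
    simp only [zero_add, one_mul] at this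
    exact this.const_mul b
  have : (fun t => ((a + b * c) + b * t) * gaussianPDFReal 0 v t)
      = fun t => (a + b * c) * gaussianPDFReal 0 v t + b * (t * gaussianPDFReal 0 v t) := by
    funext t; ring
  rw [this, integral_add h1 h2, integral_const_mul, integral_const_mul,
    integral_gaussianPDFReal_eq_one 0 hv, integral_id_gauss0]
  ring

lemma key_pdf_identity (A C μ σ σW : ℝ) (hσ : 0 < σ) (hσW : 0 < σW)
    (v1 v2 vY vT : ℝ≥0) (h1 : (v1 : ℝ) = σ ^ 2) (h2 : (v2 : ℝ) = σW ^ 2)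
    (hY : (vY : ℝ) = A ^ 2 * σ ^ 2 + σW ^ 2)
    (hT : (vT : ℝ) = σ ^ 2 * σW ^ 2 / (A ^ 2 * σ ^ 2 + σW ^ 2))
    (K L : ℝ) (hK : K = A * σ ^ 2 / (A ^ 2 * σ ^ 2 + σW ^ 2))
    (hL : L = (σW ^ 2 * μ - A * C * σ ^ 2) / (A ^ 2 * σ ^ 2 + σW ^ 2)) (m u : ℝ) :
    gaussianPDFReal μ v1 m * gaussianPDFReal (A * m + C) v2 u
    = gaussianPDFReal (A * μ + C) vY u * gaussianPDFReal (K * u + L) vT m := by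
  have hD : (0:ℝ) < A ^ 2 * σ ^ 2 + σW ^ 2 := by positivity
  simp only [gaussianPDFReal, h1, h2, hY, hT, hK, hL]
  rw [mul_mul_mul_comm, mul_mul_mul_comm ((√(2 * π * (A ^ 2 * σ ^ 2 + σW ^ 2)))⁻¹)]
  congr 1
  · rw [← mul_inv, ← mul_inv, ← Real.sqrt_mul (by positivity), ← Real.sqrt_mul (by positivity)]
    congr 1
    field_simp
  · rw [← Real.exp_add, ← Real.exp_add]
    congr 1
    field_simp
    ring

lemma core_zero (A C μ σ σW : ℝ) (hσ : 0 < σ) (hσW : 0 < σW) {B : Set ℝ}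
    (hB : MeasurableSet B) :
    ∫ p in (fun p : ℝ × ℝ => A * p.1 + C + p.2) ⁻¹' B,
        (p.1 - ((A * σ ^ 2 / (A ^ 2 * σ ^ 2 + σW ^ 2)) * (A * p.1 + C + p.2)
          + (σW ^ 2 * μ - A * C * σ ^ 2) / (A ^ 2 * σ ^ 2 + σW ^ 2)))
      ∂((gaussianReal μ ⟨σ ^ 2, sq_nonneg σ⟩).prod (gaussianReal 0 ⟨σW ^ 2, sq_nonneg σW⟩)) = 0 := by
  have hD : (0:ℝ) < A ^ 2 * σ ^ 2 + σW ^ 2 := by positivity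
  set K : ℝ := A * σ ^ 2 / (A ^ 2 * σ ^ 2 + σW ^ 2) with hK
  set L : ℝ := (σW ^ 2 * μ - A * C * σ ^ 2) / (A ^ 2 * σ ^ 2 + σW ^ 2) with hL
  set v1 : ℝ≥0 := ⟨σ ^ 2, sq_nonneg σ⟩ with hv1def
  set v2 : ℝ≥0 := ⟨σW ^ 2, sq_nonneg σW⟩ with hv2def
  set vY : ℝ≥0 := ⟨A ^ 2 * σ ^ 2 + σW ^ 2, by positivity⟩ with hvYdef
  set vT : ℝ≥0 := ⟨σ ^ 2 * σW ^ 2 / (A ^ 2 * σ ^ 2 + σW ^ 2), by positivity⟩ with hvTdef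
  have hv1 : v1 ≠ 0 := by
    rw [← NNReal.coe_ne_zero]; show (σ^2 : ℝ) ≠ 0; positivity
  have hv2 : v2 ≠ 0 := by
    rw [← NNReal.coe_ne_zero]; show (σW^2 : ℝ) ≠ 0; positivity
  have hvY : vY ≠ 0 := by
    rw [← NNReal.coe_ne_zero]; show (A ^ 2 * σ ^ 2 + σW ^ 2 : ℝ) ≠ 0; positivity
  have hvT : vT ≠ 0 := by
    rw [← NNReal.coe_ne_zero]; show (σ ^ 2 * σW ^ 2 / (A ^ 2 * σ ^ 2 + σW ^ 2) : ℝ) ≠ 0; positivity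
  -- basic integrability over the product
  have hid1 : Integrable (fun x : ℝ => x) (gaussianReal μ v1) := by
    rw [integrable_gauss_iff μ hv1]
    refine (integrable_affine_gauss μ hv1 0 1).congr
      (Filter.Eventually.of_forall fun x => by ring)
  have hid2 : Integrable (fun x : ℝ => x) (gaussianReal 0 v2) := by
    rw [integrable_gauss_iff 0 hv2]
    refine (integrable_affine_gauss 0 hv2 0 1).congr
      (Filter.Eventually.of_forall fun x => by ring)
  have hint1 : Integrable (fun p : ℝ × ℝ => p.1) ((gaussianReal μ v1).prod (gaussianReal 0 v2)) := by
    rw [integrable_prod_iff measurable_fst.aestronglyMeasurable]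
    refine ⟨Filter.Eventually.of_forall fun m => integrable_const m, ?_⟩
    simp only [integral_const, measure_univ, ENNReal.toReal_one, probReal_univ, one_smul]
    exact hid1.norm
  have hint2 : Integrable (fun p : ℝ × ℝ => p.2) ((gaussianReal μ v1).prod (gaussianReal 0 v2)) := by
    rw [integrable_prod_iff measurable_snd.aestronglyMeasurable]
    exact ⟨Filter.Eventually.of_forall fun m => hid2, integrable_const (∫ y : ℝ, ‖y‖ ∂(gaussianReal 0 v2))⟩
  have h_int : Integrable (fun p : ℝ × ℝ => p.1 - (K * (A * p.1 + C + p.2) + L)) ((gaussianReal μ v1).prod (gaussianReal 0 v2)) := by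
    refine (((hint1.const_mul (1 - K * A)).sub (hint2.const_mul K)).sub
      (integrable_const (K * C + L))).congr (Filter.Eventually.of_forall fun p => by simp only [Pi.sub_apply]; ring)
  have hkey : ∀ m u : ℝ, gaussianPDFReal μ v1 m * gaussianPDFReal (A * m + C) v2 u
      = gaussianPDFReal (A * μ + C) vY u * gaussianPDFReal (K * u + L) vT m :=
    key_pdf_identity A C μ σ σW hσ hσW v1 v2 vY vT rfl rfl rfl rfl K L hK hL
  have hYm : Measurable (fun p : ℝ × ℝ => A * p.1 + C + p.2) :=
    ((measurable_fst.const_mul A).add_const C).add measurable_snd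
  have hsm : MeasurableSet ((fun p : ℝ × ℝ => A * p.1 + C + p.2) ⁻¹' B) := hYm hB
  set F : ℝ × ℝ → ℝ := fun p =>
    Set.indicator B (fun _ => (1:ℝ)) (A * p.1 + C + p.2)
      * (p.1 - (K * (A * p.1 + C + p.2) + L)) with hF
  have hFeq : Set.indicator ((fun p : ℝ × ℝ => A * p.1 + C + p.2) ⁻¹' B)
      (fun p : ℝ × ℝ => p.1 - (K * (A * p.1 + C + p.2) + L)) = F := by
    funext p
    by_cases hp : A * p.1 + C + p.2 ∈ B <;>
      simp [hF, Set.indicator_apply, Set.mem_preimage, hp]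
  have hFint : Integrable F ((gaussianReal μ v1).prod (gaussianReal 0 v2)) := by
    rw [← hFeq]; exact h_int.indicator hsm
  have hindnn : ∀ u : ℝ, 0 ≤ Set.indicator B (fun _ => (1:ℝ)) u :=
    fun u => Set.indicator_nonneg (fun _ _ => zero_le_one) u
  set c₀ : ℝ := ∫ t, |t| * gaussianPDFReal 0 vT t with hc₀
  set G : ℝ → ℝ → ℝ := fun m u =>
    (Set.indicator B (fun _ => (1:ℝ)) u * gaussianPDFReal (A * μ + C) vY u)
      * ((m - (K * u + L)) * gaussianPDFReal (K * u + L) vT m) with hG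
  have hGmeas : AEStronglyMeasurable (Function.uncurry G) ((volume : Measure ℝ).prod volume) := by
    have m_ind : Measurable fun z : ℝ × ℝ => Set.indicator B (fun _ => (1:ℝ)) z.2 :=
      (measurable_const.indicator hB).comp measurable_snd
    have m_gy : Measurable fun z : ℝ × ℝ => gaussianPDFReal (A * μ + C) vY z.2 :=
      (measurable_gaussianPDFReal _ _).comp measurable_snd
    have m_pdfc : Measurable fun z : ℝ × ℝ => gaussianPDFReal (K * z.2 + L) vT z.1 := by
      simp only [gaussianPDFReal]
      exact measurable_const.mul
        (((((measurable_fst.sub ((measurable_snd.const_mul K).add_const L)).pow_const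
          2).neg).div_const _).exp)
    exact ((m_ind.mul m_gy).mul
      ((measurable_fst.sub ((measurable_snd.const_mul K).add_const L)).mul
        m_pdfc)).aestronglyMeasurable
  have hsec : ∀ u : ℝ, Integrable (fun m => G m u) :=
    fun u => ((integrable_affine_gauss (K * u + L) hvT (-(K * u + L)) 1).congr
      (Filter.Eventually.of_forall fun m => by ring)).const_mul _
  have hnormint : ∀ u : ℝ, (∫ m, ‖G m u‖)
      = Set.indicator B (fun _ => (1:ℝ)) u * gaussianPDFReal (A * μ + C) vY u * c₀ := by
    intro u
    have h1 : (fun m => ‖G m u‖) = fun m =>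
        (Set.indicator B (fun _ => (1:ℝ)) u * gaussianPDFReal (A * μ + C) vY u)
          * (|m - (K * u + L)| * gaussianPDFReal (K * u + L) vT m) := by
      funext m
      rw [hG]
      rw [Real.norm_eq_abs, abs_mul, abs_mul, abs_of_nonneg (hindnn u),
        abs_of_nonneg (gaussianPDFReal_nonneg _ _ _), abs_mul,
        abs_of_nonneg (gaussianPDFReal_nonneg _ _ _), mul_assoc]
    rw [h1, integral_const_mul]
    have h2 : (fun m => |m - (K * u + L)| * gaussianPDFReal (K * u + L) vT m)
        = fun m => ((fun t => |t| * gaussianPDFReal 0 vT t) (m - (K * u + L))) := by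
      funext m
      simp only [gaussianPDFReal_sub, zero_add]
    rw [h2, integral_sub_right_eq_self (fun t => |t| * gaussianPDFReal 0 vT t) (K * u + L)]
  have hswap : Integrable (Function.uncurry G) ((volume : Measure ℝ).prod volume) := by
    rw [integrable_prod_iff' hGmeas]
    refine ⟨Filter.Eventually.of_forall fun u => hsec u, ?_⟩
    have heq : (fun u => ∫ m, ‖G m u‖) = fun u =>
        Set.indicator B (fun u' => gaussianPDFReal (A * μ + C) vY u' * c₀) u := by
      funext u
      rw [hnormint u]
      by_cases hu : u ∈ B <;> simp [Set.indicator_apply, hu]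
    have hres : Integrable (fun u => ∫ m, ‖G m u‖) := by
      rw [heq]
      exact ((integrable_gaussianPDFReal _ _).mul_const c₀).indicator hB
    exact hres
  have hinner0 : ∀ u : ℝ, (∫ m, G m u) = 0 := by
    intro u
    rw [hG]
    simp only []
    rw [integral_const_mul]
    have h0 : (∫ m, (m - (K * u + L)) * gaussianPDFReal (K * u + L) vT m) = 0 := by
      have h := integral_affine_gauss (K * u + L) hvT (-(K * u + L)) 1
      have heq : (fun m => (-(K * u + L) + 1 * m) * gaussianPDFReal (K * u + L) vT m)
          = fun m => (m - (K * u + L)) * gaussianPDFReal (K * u + L) vT m :=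
        funext fun m => by ring
      rw [heq] at h
      rw [h]; ring
    rw [h0, mul_zero]
  calc ∫ p in (fun p : ℝ × ℝ => A * p.1 + C + p.2) ⁻¹' B,
          (p.1 - (K * (A * p.1 + C + p.2) + L)) ∂((gaussianReal μ v1).prod (gaussianReal 0 v2))
      = ∫ p, F p ∂((gaussianReal μ v1).prod (gaussianReal 0 v2)) := by
        rw [← integral_indicator hsm, hFeq]
    _ = ∫ m, ∫ w, F (m, w) ∂(gaussianReal 0 v2) ∂(gaussianReal μ v1) := integral_prod F hFint
    _ = ∫ m, (∫ u, Set.indicator B (fun _ => (1:ℝ)) u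
          * ((m - (K * u + L)) * gaussianPDFReal (A * m + C) v2 u)) ∂(gaussianReal μ v1) := by
        refine integral_congr_ae (Filter.Eventually.of_forall fun m => ?_)
        beta_reduce
        rw [integral_gauss 0 hv2]
        rw [← integral_sub_right_eq_self (fun w => gaussianPDFReal 0 v2 w * F (m, w)) (A * m + C)]
        refine integral_congr_ae (Filter.Eventually.of_forall fun u => ?_)
        have harg : A * m + C + (u - (A * m + C)) = u := by ring
        simp only [hF, harg, gaussianPDFReal_sub, zero_add]
        ring
    _ = ∫ m, ∫ u, gaussianPDFReal μ v1 m * (Set.indicator B (fun _ => (1:ℝ)) u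
          * ((m - (K * u + L)) * gaussianPDFReal (A * m + C) v2 u)) := by
        rw [integral_gauss μ hv1]
        refine integral_congr_ae (Filter.Eventually.of_forall fun m => ?_)
        beta_reduce
        exact (integral_const_mul _ _).symm
    _ = ∫ m, ∫ u, G m u := by
        refine integral_congr_ae (Filter.Eventually.of_forall fun m => ?_)
        beta_reduce
        refine integral_congr_ae (Filter.Eventually.of_forall fun u => ?_)
        beta_reduce
        rw [hG]
        calc gaussianPDFReal μ v1 m * (Set.indicator B (fun _ => (1:ℝ)) u
              * ((m - (K * u + L)) * gaussianPDFReal (A * m + C) v2 u))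
            = Set.indicator B (fun _ => (1:ℝ)) u * ((m - (K * u + L))
              * (gaussianPDFReal μ v1 m * gaussianPDFReal (A * m + C) v2 u)) := by ring
          _ = Set.indicator B (fun _ => (1:ℝ)) u * ((m - (K * u + L))
              * (gaussianPDFReal (A * μ + C) vY u * gaussianPDFReal (K * u + L) vT m)) := by
              rw [hkey m u]
          _ = (Set.indicator B (fun _ => (1:ℝ)) u * gaussianPDFReal (A * μ + C) vY u)
              * ((m - (K * u + L)) * gaussianPDFReal (K * u + L) vT m) := by ring
    _ = ∫ u, ∫ m, G m u := integral_integral_swap hswap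
    _ = 0 := by
        rw [integral_congr_ae (Filter.Eventually.of_forall fun u => hinner0 u)]
        exact integral_zero _ _

theorem stmt0 (A C μ σ σW : ℝ) (hσ : 0 < σ) (hσW : 0 < σW) :
    let ν : Measure (ℝ × ℝ) :=
      (gaussianReal μ ⟨σ ^ 2, sq_nonneg σ⟩).prod (gaussianReal 0 ⟨σW ^ 2, sq_nonneg σW⟩)
    let M : ℝ × ℝ → ℝ := fun p => p.1
    let Y : ℝ × ℝ → ℝ := fun p => A * p.1 + C + p.2
    let K : ℝ := A * σ ^ 2 / (A ^ 2 * σ ^ 2 + σW ^ 2)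
    let L : ℝ := (σW ^ 2 * μ - A * C * σ ^ 2) / (A ^ 2 * σ ^ 2 + σW ^ 2)
    ν[M | MeasurableSpace.comap Y inferInstance] =ᵐ[ν] fun ω => K * Y ω + L := by
  intro ν M Y K L
  have hv1 : (⟨σ ^ 2, sq_nonneg σ⟩ : ℝ≥0) ≠ 0 := by
    exact NNReal.coe_ne_zero.mp (by show (σ ^ 2 : ℝ) ≠ 0; positivity)
  have hv2 : (⟨σW ^ 2, sq_nonneg σW⟩ : ℝ≥0) ≠ 0 := by
    exact NNReal.coe_ne_zero.mp (by show (σW ^ 2 : ℝ) ≠ 0; positivity)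
  have hYmeas : Measurable Y := ((measurable_fst.const_mul A).add_const C).add measurable_snd
  have hm : MeasurableSpace.comap Y inferInstance ≤ (inferInstance : MeasurableSpace (ℝ × ℝ)) :=
    hYmeas.comap_le
  have hPg : ∀ (c : ℝ) (v : ℝ≥0), IsProbabilityMeasure (gaussianReal c v) := fun _ _ => inferInstance
  haveI := hPg μ ⟨σ ^ 2, sq_nonneg σ⟩
  haveI := hPg 0 ⟨σW ^ 2, sq_nonneg σW⟩
  haveI hPν : IsProbabilityMeasure ν := by
    have : IsProbabilityMeasure ((gaussianReal μ ⟨σ ^ 2, sq_nonneg σ⟩).prod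
        (gaussianReal 0 ⟨σW ^ 2, sq_nonneg σW⟩)) := inferInstance
    exact this
  -- integrability
  have hid1 : Integrable (fun x : ℝ => x) (gaussianReal μ ⟨σ ^ 2, sq_nonneg σ⟩) := by
    rw [integrable_gauss_iff μ hv1]
    exact (integrable_affine_gauss μ hv1 0 1).congr (Filter.Eventually.of_forall fun x => by ring)
  have hid2 : Integrable (fun x : ℝ => x) (gaussianReal 0 ⟨σW ^ 2, sq_nonneg σW⟩) := by
    rw [integrable_gauss_iff 0 hv2]
    exact (integrable_affine_gauss 0 hv2 0 1).congr (Filter.Eventually.of_forall fun x => by ring)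
  have hint1 : Integrable (fun p : ℝ × ℝ => p.1) ν := by
    rw [integrable_prod_iff measurable_fst.aestronglyMeasurable]
    refine ⟨Filter.Eventually.of_forall fun m => integrable_const m, ?_⟩
    simp only [integral_const, measure_univ, ENNReal.toReal_one, probReal_univ, one_smul]
    exact hid1.norm
  have hint2 : Integrable (fun p : ℝ × ℝ => p.2) ν := by
    rw [integrable_prod_iff measurable_snd.aestronglyMeasurable]
    exact ⟨Filter.Eventually.of_forall fun m => hid2,
      integrable_const (∫ y : ℝ, ‖y‖ ∂(gaussianReal 0 ⟨σW ^ 2, sq_nonneg σW⟩))⟩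
  have hMint : Integrable M ν := hint1
  have hgint : Integrable (fun ω => K * Y ω + L) ν := by
    refine (((hint1.const_mul (K * A)).add (hint2.const_mul K)).add
      (integrable_const (K * C + L))).congr (Filter.Eventually.of_forall fun p => ?_)
    simp only [Pi.add_apply]
    ring
  -- comap-measurability of the candidate
  have hYc : @Measurable (ℝ × ℝ) ℝ (MeasurableSpace.comap Y inferInstance) _ Y :=
    fun s hs => ⟨s, hs, rfl⟩
  have hgm : AEStronglyMeasurable[MeasurableSpace.comap Y inferInstance]
      (fun ω => K * Y ω + L) ν :=
    StronglyMeasurable.aestronglyMeasurable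
      (Measurable.stronglyMeasurable ((hYc.const_mul K).add_const L))
  -- the set-integral identity
  have hg_eq : ∀ s : Set (ℝ × ℝ), MeasurableSet[MeasurableSpace.comap Y inferInstance] s →
      ν s < ⊤ → ∫ x in s, (K * Y x + L) ∂ν = ∫ x in s, M x ∂ν := by
    intro s hs _
    obtain ⟨B, hB, rfl⟩ := hs
    have hz : ∫ x in Y ⁻¹' B, (M x - (K * Y x + L)) ∂ν = 0 :=
      core_zero A C μ σ σW hσ hσW hB
    rw [integral_sub hMint.integrableOn hgint.integrableOn] at hz
    linarith
  exact (ae_eq_condExp_of_forall_setIntegral_eq hm hMint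
    (fun s _ _ => hgint.integrableOn) hg_eq hgm).symm
end

section
/- Let μ_e, μ_d, C, A ∈ ℝ, σ_e, σ_d, σ_W > 0, λ > 0, and set δ = μ_e − μ_d, K = Aσ_d²/(A²σ_d² + σ_W²), L = (σ_W²μ_d − ACσ_d²)/(A²σ_d² + σ_W²). For (m,w) distributed according to (gaussianReal μ_e σ_e²) ⊗ (gaussianReal 0 σ_W²) and u = K(Am + C + w) + L, the expectation of (m − u)² + λ(Am + C)² equals σ_W⁴(σ_e² + δ² − σ_d²)/(A²σ_d² + σ_W²)² + σ_d²σ_W²/(A²σ_d² + σ_W²) + λA²σ_e² + λ(Aμ_e + C)². -/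
open MeasureTheory ProbabilityTheory Real
open scoped NNReal ENNReal

lemma my_rpow_two (x : ℝ) : x ^ (2:ℝ) = x ^ 2 := by
  rw [← Real.rpow_natCast x 2]; norm_num

lemma my_integrable_sq_exp {b : ℝ} (hb : 0 < b) :
    Integrable (fun x : ℝ => x ^ 2 * Real.exp (-b * x ^ 2)) := by
  have h := integrable_rpow_mul_exp_neg_mul_sq hb (s := 2) (by norm_num)
  simpa [my_rpow_two] using h

lemma my_int_x_exp {b : ℝ} (hb : 0 < b) :
    ∫ x : ℝ, x * Real.exp (-b * x ^ 2) = 0 := by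
  have h := MeasureTheory.integral_neg_eq_self (fun x : ℝ => x * Real.exp (-b * x ^ 2)) volume
  have h2 : (fun x : ℝ => (-x) * Real.exp (-b * (-x) ^ 2))
      = fun x : ℝ => -(x * Real.exp (-b * x ^ 2)) := by
    funext x; rw [neg_sq]; ring
  rw [h2, integral_neg] at h
  linarith

lemma my_int_sq_exp {b : ℝ} (hb : 0 < b) :
    ∫ x : ℝ, x ^ 2 * Real.exp (-b * x ^ 2) = Real.sqrt (π / b) / (2 * b) := by
  have hint := my_integrable_sq_exp hb
  have heq : ∫ x in Set.Iic (0:ℝ), x ^ 2 * Real.exp (-b * x ^ 2)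
      = ∫ x in Set.Ioi (0:ℝ), x ^ 2 * Real.exp (-b * x ^ 2) := by
    rw [show (0:ℝ) = -0 by norm_num, ← integral_comp_neg_Ioi]
    simp
  have hsplit := MeasureTheory.integral_add_compl (measurableSet_Ioi (a := (0:ℝ))) hint
  rw [Set.compl_Ioi] at hsplit
  have hIoi : ∫ x in Set.Ioi (0:ℝ), x ^ 2 * Real.exp (-b * x ^ 2)
      = b ^ (-(3:ℝ)/2) * (1/2) * Real.Gamma (3/2) := by
    have h2 := integral_rpow_mul_exp_neg_mul_rpow (p := 2) (q := 2) (b := b)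
      (by norm_num) (by norm_num) hb
    rw [show ((2:ℝ)+1)/2 = 3/2 by norm_num, show (-((2:ℝ)+1))/2 = -(3:ℝ)/2 by norm_num] at h2
    rw [← h2]
    refine setIntegral_congr_fun measurableSet_Ioi (fun x hx => ?_)
    rw [my_rpow_two]
  have hG : Real.Gamma (3/2) = Real.sqrt π / 2 := by
    rw [show (3:ℝ)/2 = 1/2 + 1 by norm_num, Real.Gamma_add_one (by norm_num),
      Real.Gamma_one_half_eq]
    ring
  have hb32 : b ^ (-(3:ℝ)/2) = (Real.sqrt b * b)⁻¹ := by
    rw [show (-(3:ℝ)/2) = -(3/2 : ℝ) by norm_num, Real.rpow_neg hb.le,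
      show (3/2 : ℝ) = 1/2 + 1 by norm_num, Real.rpow_add hb, Real.rpow_one,
      ← Real.sqrt_eq_rpow]
  have hfin := hsplit
  rw [heq, hIoi, hG, hb32] at hfin
  rw [← hfin, Real.sqrt_div pi_nonneg]
  have hsb : (0:ℝ) < Real.sqrt b := Real.sqrt_pos.mpr hb
  field_simp
  ring

lemma my_pdf_eq (μ σ : ℝ) (x : ℝ) :
    gaussianPDFReal μ ⟨σ^2, sq_nonneg σ⟩ x
      = (Real.sqrt (2*π*σ^2))⁻¹ * Real.exp (-(2*σ^2)⁻¹ * (x-μ)^2) := by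
  simp only [gaussianPDFReal]
  change (Real.sqrt (2*π*σ^2))⁻¹ * Real.exp (-(x-μ)^2/(2*σ^2)) = _
  rw [show -(x-μ)^2/(2*σ^2) = -(2*σ^2)⁻¹*(x-μ)^2 from by ring]

lemma my_gauss_int (μ σ : ℝ) (hσ : 0 < σ) (g : ℝ → ℝ) :
    ∫ x, g x ∂(gaussianReal μ ⟨σ^2, sq_nonneg σ⟩)
      = ∫ x, gaussianPDFReal μ ⟨σ^2, sq_nonneg σ⟩ x * g x := by
  have hv : (⟨σ^2, sq_nonneg σ⟩ : ℝ≥0) ≠ 0 := by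
    intro h
    have := congrArg NNReal.toReal h
    change σ ^ 2 = (0:ℝ) at this
    exact (pow_ne_zero 2 hσ.ne') this
  rw [gaussianReal_of_var_ne_zero _ hv]
  have hpdf : gaussianPDF μ ⟨σ^2, sq_nonneg σ⟩
      = fun x => ((Real.toNNReal (gaussianPDFReal μ ⟨σ^2, sq_nonneg σ⟩ x) : ℝ≥0) : ℝ≥0∞) := rfl
  erw [hpdf, integral_withDensity_eq_integral_smul
    ((measurable_gaussianPDFReal _ _).real_toNNReal)]
  congr 1
  funext x
  erw [NNReal.smul_def, Real.coe_toNNReal _ (gaussianPDFReal_nonneg _ _ _), smul_eq_mul]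

lemma my_gauss_integrable_iff (μ σ : ℝ) (hσ : 0 < σ) (g : ℝ → ℝ) :
    Integrable g (gaussianReal μ ⟨σ^2, sq_nonneg σ⟩)
      ↔ Integrable (fun x => gaussianPDFReal μ ⟨σ^2, sq_nonneg σ⟩ x * g x) := by
  have hv : (⟨σ^2, sq_nonneg σ⟩ : ℝ≥0) ≠ 0 := by
    intro h
    have := congrArg NNReal.toReal h
    change σ ^ 2 = (0:ℝ) at this
    exact (pow_ne_zero 2 hσ.ne') this
  rw [gaussianReal_of_var_ne_zero _ hv]
  have hpdf : gaussianPDF μ ⟨σ^2, sq_nonneg σ⟩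
      = fun x => ((Real.toNNReal (gaussianPDFReal μ ⟨σ^2, sq_nonneg σ⟩ x) : ℝ≥0) : ℝ≥0∞) := rfl
  erw [hpdf, integrable_withDensity_iff_integrable_smul
    ((measurable_gaussianPDFReal _ _).real_toNNReal)]
  constructor <;> intro h <;> refine h.congr (Filter.Eventually.of_forall fun x => ?_) <;>
    simp only [NNReal.smul_def, Real.coe_toNNReal _ (gaussianPDFReal_nonneg _ _ _), smul_eq_mul] <;>
    erw [Real.coe_toNNReal _ (gaussianPDFReal_nonneg _ _ _)]

lemma my_gauss_poly (μ σ : ℝ) (hσ : 0 < σ) (q0 q1 q2 : ℝ) :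
    Integrable (fun x => q0 + q1*x + q2*x^2) (gaussianReal μ ⟨σ^2, sq_nonneg σ⟩)
    ∧ ∫ x, (q0 + q1*x + q2*x^2) ∂(gaussianReal μ ⟨σ^2, sq_nonneg σ⟩)
      = q0 + q1*μ + q2*(σ^2 + μ^2) := by
  have hb : (0:ℝ) < (2*σ^2)⁻¹ := by positivity
  set H : ℝ → ℝ := fun y => (q0 + q1*μ + q2*μ^2) * Real.exp (-(2*σ^2)⁻¹*y^2)
      + (q1 + 2*q2*μ) * (y * Real.exp (-(2*σ^2)⁻¹*y^2))
      + q2 * (y^2 * Real.exp (-(2*σ^2)⁻¹*y^2)) with hHdef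
  have hE := integrable_exp_neg_mul_sq hb
  have hxE := integrable_mul_exp_neg_mul_sq hb
  have hx2E := my_integrable_sq_exp hb
  have hHint : Integrable H := ((hE.const_mul _).add (hxE.const_mul _)).add (hx2E.const_mul _)
  have hpc : (fun x => gaussianPDFReal μ ⟨σ^2, sq_nonneg σ⟩ x * (q0 + q1*x + q2*x^2))
      = fun x => (Real.sqrt (2*π*σ^2))⁻¹ * H (x - μ) := by
    funext x
    rw [my_pdf_eq, hHdef]
    ring
  have hπ : π/((2*σ^2)⁻¹) = 2*π*σ^2 := by
    field_simp
  have hs : (0:ℝ) < Real.sqrt (2*π*σ^2) := Real.sqrt_pos.mpr (by positivity)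
  constructor
  · rw [my_gauss_integrable_iff μ σ hσ, hpc]
    exact (hHint.const_mul _).comp_sub_right μ
  · rw [my_gauss_int μ σ hσ, hpc, integral_const_mul,
      integral_sub_right_eq_self (μ := volume) H μ, hHdef]
    beta_reduce
    have hsum1 : Integrable (fun x : ℝ => (q0 + q1*μ + q2*μ^2) * Real.exp (-(2*σ^2)⁻¹*x^2)
        + (q1 + 2*q2*μ) * (x * Real.exp (-(2*σ^2)⁻¹*x^2))) :=
      (hE.const_mul _).add (hxE.const_mul _)
    have hsum2 : Integrable (fun x : ℝ => q2 * (x^2 * Real.exp (-(2*σ^2)⁻¹*x^2))) :=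
      hx2E.const_mul _
    rw [integral_add hsum1 hsum2,
      integral_add (hE.const_mul _) (hxE.const_mul _),
      integral_const_mul, integral_const_mul, integral_const_mul,
      integral_gaussian, my_int_x_exp hb, my_int_sq_exp hb, hπ]
    field_simp
    ring

theorem stmt1 (μe μd C A σe σd σW lam : ℝ)
    (hσe : 0 < σe) (hσd : 0 < σd) (hσW : 0 < σW) (hlam : 0 < lam) :
    let δ : ℝ := μe - μd
    let K : ℝ := A * σd ^ 2 / (A ^ 2 * σd ^ 2 + σW ^ 2)
    let L : ℝ := (σW ^ 2 * μd - A * C * σd ^ 2) / (A ^ 2 * σd ^ 2 + σW ^ 2)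
    let ν : Measure (ℝ × ℝ) :=
      (gaussianReal μe ⟨σe ^ 2, sq_nonneg σe⟩).prod (gaussianReal 0 ⟨σW ^ 2, sq_nonneg σW⟩)
    ∫ p, ((p.1 - (K * (A * p.1 + C + p.2) + L)) ^ 2 + lam * (A * p.1 + C) ^ 2) ∂ν
      = σW ^ 4 * (σe ^ 2 + δ ^ 2 - σd ^ 2) / (A ^ 2 * σd ^ 2 + σW ^ 2) ^ 2
        + σd ^ 2 * σW ^ 2 / (A ^ 2 * σd ^ 2 + σW ^ 2)
        + lam * A ^ 2 * σe ^ 2 + lam * (A * μe + C) ^ 2 := by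
  intro δ K L ν
  haveI : IsProbabilityMeasure (gaussianReal 0 ⟨σW ^ 2, sq_nonneg σW⟩) :=
    instIsProbabilityMeasureGaussianReal _ _
  haveI : IsProbabilityMeasure (gaussianReal μe ⟨σe ^ 2, sq_nonneg σe⟩) :=
    instIsProbabilityMeasureGaussianReal _ _
  have hD : (0:ℝ) < A ^ 2 * σd ^ 2 + σW ^ 2 := by positivity
  have hK : K = A * σd ^ 2 / (A ^ 2 * σd ^ 2 + σW ^ 2) := rfl
  have hL : L = (σW ^ 2 * μd - A * C * σd ^ 2) / (A ^ 2 * σd ^ 2 + σW ^ 2) := rfl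
  have hδ : δ = μe - μd := rfl
  obtain ⟨hint1, hval1⟩ := my_gauss_poly μe σe hσe ((K*C+L)^2 + lam*C^2)
    (-2*(1-K*A)*(K*C+L) + 2*lam*A*C) ((1-K*A)^2 + lam*A^2)
  obtain ⟨hint2, hval2⟩ := my_gauss_poly 0 σW hσW 0 (2*K*(K*C+L)) (K^2)
  obtain ⟨hint3, hval3⟩ := my_gauss_poly 0 σW hσW 0 1 0
  obtain ⟨hint4, hval4⟩ := my_gauss_poly μe σe hσe 0 (-2*(1-K*A)*K) 0
  have hone : Integrable (fun _ : ℝ => (1:ℝ)) (gaussianReal 0 ⟨σW ^ 2, sq_nonneg σW⟩) :=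
    integrable_const 1
  have hone' : Integrable (fun _ : ℝ => (1:ℝ)) (gaussianReal μe ⟨σe ^ 2, sq_nonneg σe⟩) :=
    integrable_const 1
  have hfun : (fun p : ℝ × ℝ =>
        (p.1 - (K * (A * p.1 + C + p.2) + L)) ^ 2 + lam * (A * p.1 + C) ^ 2)
      = fun p : ℝ × ℝ =>
        ((((K*C+L)^2 + lam*C^2) + (-2*(1-K*A)*(K*C+L) + 2*lam*A*C)*p.1
            + ((1-K*A)^2 + lam*A^2)*p.1^2) * (1:ℝ)
          + (1:ℝ) * ((0:ℝ) + (2*K*(K*C+L))*p.2 + K^2*p.2^2))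
          + ((0:ℝ) + (-2*(1-K*A)*K)*p.1 + 0*p.1^2) * ((0:ℝ) + 1*p.2 + 0*p.2^2) := by
    funext p
    ring
  rw [hfun]
  have hI1 : Integrable (fun p : ℝ × ℝ =>
      (((K*C+L)^2 + lam*C^2) + (-2*(1-K*A)*(K*C+L) + 2*lam*A*C)*p.1
        + ((1-K*A)^2 + lam*A^2)*p.1^2) * (1:ℝ)) ν := hint1.mul_prod hone
  have hI2 : Integrable (fun p : ℝ × ℝ =>
      (1:ℝ) * ((0:ℝ) + (2*K*(K*C+L))*p.2 + K^2*p.2^2)) ν := hone'.mul_prod hint2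
  have hI3 : Integrable (fun p : ℝ × ℝ =>
      ((0:ℝ) + (-2*(1-K*A)*K)*p.1 + 0*p.1^2) * ((0:ℝ) + 1*p.2 + 0*p.2^2)) ν :=
    hint4.mul_prod hint3
  have hI12 : Integrable (fun p : ℝ × ℝ =>
      (((K*C+L)^2 + lam*C^2) + (-2*(1-K*A)*(K*C+L) + 2*lam*A*C)*p.1
          + ((1-K*A)^2 + lam*A^2)*p.1^2) * (1:ℝ)
        + (1:ℝ) * ((0:ℝ) + (2*K*(K*C+L))*p.2 + K^2*p.2^2)) ν := hI1.add hI2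
  rw [integral_add hI12 hI3, integral_add hI1 hI2]
  show (∫ p : ℝ × ℝ, (fun m => ((K*C+L)^2 + lam*C^2) + (-2*(1-K*A)*(K*C+L) + 2*lam*A*C)*m
        + ((1-K*A)^2 + lam*A^2)*m^2) p.1 * (fun _ : ℝ => (1:ℝ)) p.2 ∂((gaussianReal μe ⟨σe ^ 2, sq_nonneg σe⟩).prod (gaussianReal 0 ⟨σW ^ 2, sq_nonneg σW⟩)))
      + (∫ p : ℝ × ℝ, (fun _ : ℝ => (1:ℝ)) p.1
          * (fun w => (0:ℝ) + (2*K*(K*C+L))*w + K^2*w^2) p.2 ∂((gaussianReal μe ⟨σe ^ 2, sq_nonneg σe⟩).prod (gaussianReal 0 ⟨σW ^ 2, sq_nonneg σW⟩)))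
      + (∫ p : ℝ × ℝ, (fun m => (0:ℝ) + (-2*(1-K*A)*K)*m + 0*m^2) p.1
          * (fun w => (0:ℝ) + 1*w + 0*w^2) p.2 ∂((gaussianReal μe ⟨σe ^ 2, sq_nonneg σe⟩).prod (gaussianReal 0 ⟨σW ^ 2, sq_nonneg σW⟩))) = _
  have e1 := integral_prod_mul (μ := gaussianReal μe ⟨σe ^ 2, sq_nonneg σe⟩)
    (ν := gaussianReal 0 ⟨σW ^ 2, sq_nonneg σW⟩)
    (f := fun m => ((K*C+L)^2 + lam*C^2) + (-2*(1-K*A)*(K*C+L) + 2*lam*A*C)*m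
        + ((1-K*A)^2 + lam*A^2)*m^2) (g := fun _ : ℝ => (1:ℝ))
  have e2 := integral_prod_mul (μ := gaussianReal μe ⟨σe ^ 2, sq_nonneg σe⟩)
    (ν := gaussianReal 0 ⟨σW ^ 2, sq_nonneg σW⟩)
    (f := fun _ : ℝ => (1:ℝ)) (g := fun w => (0:ℝ) + (2*K*(K*C+L))*w + K^2*w^2)
  have e3 := integral_prod_mul (μ := gaussianReal μe ⟨σe ^ 2, sq_nonneg σe⟩)
    (ν := gaussianReal 0 ⟨σW ^ 2, sq_nonneg σW⟩)
    (f := fun m => (0:ℝ) + (-2*(1-K*A)*K)*m + 0*m^2) (g := fun w => (0:ℝ) + 1*w + 0*w^2)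
  rw [e1, e2, e3, hval1, hval2, hval3, hval4]
  have h1 : ∫ _ : ℝ, (1:ℝ) ∂(gaussianReal 0 ⟨σW ^ 2, sq_nonneg σW⟩) = 1 := by simp
  have h1' : ∫ _ : ℝ, (1:ℝ) ∂(gaussianReal μe ⟨σe ^ 2, sq_nonneg σe⟩) = 1 := by simp
  rw [h1, h1', hK, hL, hδ]
  field_simp
  ring
end

section
/- Let μ_e, μ_d, C, A ∈ ℝ, σ_e, σ_d, σ_W > 0 and set δ = μ_e − μ_d, K = Aσ_d²/(A²σ_d² + σ_W²), L = (σ_W²μ_d − ACσ_d²)/(A²σ_d² + σ_W²). For (m,w) distributed according to (gaussianReal μ_e σ_e²) ⊗ (gaussianReal 0 σ_W²) and u = K(Am + C + w) + L, the expectation of (m − u)² equals (A²σ_d⁴σ_W² + σ_W⁴(σ_e² + δ²))/(A²σ_d² + σ_W²)²; in particular this value does not depend on C. -/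
open MeasureTheory ProbabilityTheory Real Filter Set
open scoped NNReal ENNReal

section Aux

lemma tendsto_mul_exp_cocompact {b : ℝ} (hb : 0 < b) :
    Tendsto (fun x : ℝ => x * rexp (-b * x ^ 2)) (Filter.cocompact ℝ) (nhds 0) := by
  have h := tendsto_rpow_abs_mul_exp_neg_mul_sq_cocompact hb 1
  refine squeeze_zero_norm (fun x => ?_) h
  rw [Real.rpow_one, Real.norm_eq_abs, abs_mul, abs_of_pos (Real.exp_pos _)]

lemma integral_id_mul_exp {b : ℝ} (hb : 0 < b) :
    ∫ x : ℝ, x * rexp (-b * x ^ 2) = 0 := by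
  have h := integral_neg_eq_self (fun x : ℝ => x * rexp (-b * x ^ 2)) volume
  simp only [neg_sq, neg_mul] at h
  rw [integral_neg] at h
  simp only [neg_mul]
  linarith

lemma integrable_sq_mul_exp {b : ℝ} (hb : 0 < b) :
    Integrable fun x : ℝ => x ^ 2 * rexp (-b * x ^ 2) := by
  have h := integrable_rpow_mul_exp_neg_mul_sq hb (by norm_num : (-1:ℝ) < 2)
  have h2 : ∀ x : ℝ, x ^ (2:ℝ) = x ^ 2 := fun x => by
    rw [show (2:ℝ) = ((2:ℕ):ℝ) by norm_num, Real.rpow_natCast]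
  simpa only [h2] using h

lemma integral_sq_mul_exp {b : ℝ} (hb : 0 < b) :
    ∫ x : ℝ, x ^ 2 * rexp (-b * x ^ 2) = (2 * b)⁻¹ * Real.sqrt (π / b) := by
  set g : ℝ → ℝ := fun x => -(2 * b)⁻¹ * (x * rexp (-b * x ^ 2)) with hg
  set f' : ℝ → ℝ := fun x => x ^ 2 * rexp (-b * x ^ 2) - (2 * b)⁻¹ * rexp (-b * x ^ 2) with hf'
  have hbne : (b : ℝ) ≠ 0 := hb.ne'
  have hderiv : ∀ x : ℝ, HasDerivAt g (f' x) x := by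
    intro x
    have h1 : HasDerivAt (fun y : ℝ => -b * y ^ 2) (-b * (2 * x)) x := by
      have := (hasDerivAt_pow 2 x).const_mul (-b)
      simpa using this
    have h2 := h1.exp
    have h3 := (hasDerivAt_id x).fun_mul h2
    have h4 : HasDerivAt g _ x := h3.const_mul (-(2 * b)⁻¹)
    convert h4 using 1
    simp only [hf', id_eq]
    field_simp
    ring
  have hint : Integrable f' :=
    (integrable_sq_mul_exp hb).sub ((integrable_exp_neg_mul_sq hb).const_mul _)
  have hcc : Tendsto g (Filter.cocompact ℝ) (nhds 0) := by
    have h := (tendsto_mul_exp_cocompact hb).const_mul (-(2 * b)⁻¹)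
    rw [mul_zero] at h
    exact h
  have htop : Tendsto g atTop (nhds 0) :=
    hcc.mono_left (by rw [cocompact_eq_atBot_atTop]; exact le_sup_right)
  have hbot : Tendsto g atBot (nhds 0) :=
    hcc.mono_left (by rw [cocompact_eq_atBot_atTop]; exact le_sup_left)
  have hIoi : ∫ x in Ioi (0:ℝ), f' x = 0 - g 0 :=
    integral_Ioi_of_hasDerivAt_of_tendsto (hderiv 0).continuousAt.continuousWithinAt
      (fun x _ => hderiv x) hint.integrableOn htop
  have hIic : ∫ x in Iic (0:ℝ), f' x = g 0 - 0 :=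
    integral_Iic_of_hasDerivAt_of_tendsto (hderiv 0).continuousAt.continuousWithinAt
      (fun x _ => hderiv x) hint.integrableOn hbot
  have hg0 : g 0 = 0 := by simp [hg]
  have htot : ∫ x, f' x = 0 := by
    rw [← intervalIntegral.integral_Iic_add_Ioi (b := (0:ℝ)) hint.integrableOn hint.integrableOn, hIoi, hIic, hg0]
    ring
  have hsub := integral_sub (integrable_sq_mul_exp hb)
    ((integrable_exp_neg_mul_sq hb).const_mul (2 * b)⁻¹)
  rw [hf'] at htot
  rw [htot] at hsub
  have hc : ∫ x : ℝ, (2 * b)⁻¹ * rexp (-b * x ^ 2) = (2 * b)⁻¹ * Real.sqrt (π / b) := by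
    rw [MeasureTheory.integral_const_mul, integral_gaussian]
  linarith [hsub, hc]

lemma integrable_exp_poly {b : ℝ} (hb : 0 < b) (α β γ : ℝ) :
    Integrable (fun y : ℝ => (α * y ^ 2 + β * y + γ) * rexp (-b * y ^ 2)) := by
  have h := (((integrable_sq_mul_exp hb).const_mul α).add
    ((integrable_mul_exp_neg_mul_sq hb).const_mul β)).add
    ((integrable_exp_neg_mul_sq hb).const_mul γ)
  exact h.congr (ae_of_all _ fun x => by simp only [Pi.add_apply]; ring)

lemma integral_exp_poly {b : ℝ} (hb : 0 < b) (α β γ : ℝ) :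
    ∫ y : ℝ, (α * y ^ 2 + β * y + γ) * rexp (-b * y ^ 2)
      = α * ((2 * b)⁻¹ * Real.sqrt (π / b)) + γ * Real.sqrt (π / b) := by
  have h1 : Integrable fun y : ℝ => α * (y ^ 2 * rexp (-b * y ^ 2)) :=
    (integrable_sq_mul_exp hb).const_mul α
  have h2 : Integrable fun y : ℝ => β * (y * rexp (-b * y ^ 2)) :=
    (integrable_mul_exp_neg_mul_sq hb).const_mul β
  have h3 : Integrable fun y : ℝ => γ * rexp (-b * y ^ 2) :=
    (integrable_exp_neg_mul_sq hb).const_mul γ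
  have e : (fun y : ℝ => (α * y ^ 2 + β * y + γ) * rexp (-b * y ^ 2))
      = fun y : ℝ => α * (y ^ 2 * rexp (-b * y ^ 2))
          + (β * (y * rexp (-b * y ^ 2)) + γ * rexp (-b * y ^ 2)) := by
    funext y; ring
  have h23 : Integrable (fun y : ℝ => β * (y * rexp (-b * y ^ 2)) + γ * rexp (-b * y ^ 2))
      volume := h2.add h3
  rw [e, integral_add h1 h23, integral_add h2 h3,
    MeasureTheory.integral_const_mul, MeasureTheory.integral_const_mul,
    MeasureTheory.integral_const_mul, integral_sq_mul_exp hb, integral_id_mul_exp hb,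
    integral_gaussian]
  ring

lemma integral_gaussianReal_eq (μ : ℝ) {v : ℝ≥0} (hv : v ≠ 0) (g : ℝ → ℝ) :
    ∫ x, g x ∂(gaussianReal μ v) = ∫ x, gaussianPDFReal μ v x * g x := by
  rw [gaussianReal_of_var_ne_zero _ hv]
  have hmeas : Measurable fun x => (gaussianPDFReal μ v x).toNNReal :=
    (measurable_gaussianPDFReal μ v).real_toNNReal
  have hdeq : gaussianPDF μ v = fun x => (((gaussianPDFReal μ v x).toNNReal : ℝ≥0) : ℝ≥0∞) := by
    funext x; rfl
  rw [hdeq, integral_withDensity_eq_integral_smul hmeas]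
  refine integral_congr_ae (ae_of_all _ fun x => ?_)
  simp [NNReal.smul_def, Real.coe_toNNReal _ (gaussianPDFReal_nonneg μ v x)]

lemma integrable_gaussianReal_iff (μ : ℝ) {v : ℝ≥0} (hv : v ≠ 0) (g : ℝ → ℝ) :
    Integrable g (gaussianReal μ v)
      ↔ Integrable (fun x => gaussianPDFReal μ v x * g x) volume := by
  rw [gaussianReal_of_var_ne_zero _ hv]
  have hmeas : Measurable fun x => (gaussianPDFReal μ v x).toNNReal :=
    (measurable_gaussianPDFReal μ v).real_toNNReal
  have hdeq : gaussianPDF μ v = fun x => (((gaussianPDFReal μ v x).toNNReal : ℝ≥0) : ℝ≥0∞) := by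
    funext x; rfl
  rw [hdeq, integrable_withDensity_iff_integrable_smul hmeas]
  exact integrable_congr (ae_of_all _ fun x => by
    simp [NNReal.smul_def, Real.coe_toNNReal _ (gaussianPDFReal_nonneg μ v x)])

lemma gauss_poly (μ σ : ℝ) (hσ : 0 < σ) (α β γ : ℝ) :
    Integrable (fun x => α * x ^ 2 + β * x + γ) (gaussianReal μ ⟨σ ^ 2, sq_nonneg σ⟩) ∧
    ∫ x, (α * x ^ 2 + β * x + γ) ∂(gaussianReal μ ⟨σ ^ 2, sq_nonneg σ⟩)
      = α * (σ ^ 2 + μ ^ 2) + β * μ + γ := by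
  set v : ℝ≥0 := ⟨σ ^ 2, sq_nonneg σ⟩ with hvdef
  have hv : v ≠ 0 := by
    intro h
    have h2 : σ ^ 2 = 0 := congrArg NNReal.toReal h
    exact (pow_pos hσ 2).ne' h2
  set b : ℝ := (2 * σ ^ 2)⁻¹ with hbdef
  have hb : 0 < b := by positivity
  set c0 : ℝ := (Real.sqrt (2 * π * σ ^ 2))⁻¹ with hc0def
  have hpdf : ∀ x, gaussianPDFReal μ v x = c0 * rexp (-b * (x - μ) ^ 2) := by
    intro x
    have hcoe : ((v : ℝ≥0) : ℝ) = σ ^ 2 := rfl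
    rw [gaussianPDFReal, hcoe]
    congr 1
    rw [hbdef]
    ring
  -- pointwise identity after shifting
  have hkey : ∀ y : ℝ, gaussianPDFReal μ v (y + μ) * (α * (y + μ) ^ 2 + β * (y + μ) + γ)
      = c0 * ((α * y ^ 2 + (2 * α * μ + β) * y + (α * μ ^ 2 + β * μ + γ)) * rexp (-b * y ^ 2)) := by
    intro y
    rw [hpdf]
    simp only [add_sub_cancel_right]
    ring
  -- integrability at volume level
  have hIvol : Integrable (fun x => gaussianPDFReal μ v x
      * (α * x ^ 2 + β * x + γ)) volume := by
    have h1 := ((integrable_exp_poly hb α (2 * α * μ + β) (α * μ ^ 2 + β * μ + γ)).const_mul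
      c0).comp_sub_right μ
    refine h1.congr (ae_of_all _ fun x => ?_)
    have h2 := (hkey (x - μ)).symm
    simpa using h2
  have hintg : Integrable (fun x => α * x ^ 2 + β * x + γ) (gaussianReal μ v) :=
    (integrable_gaussianReal_iff μ hv _).2 hIvol
  refine ⟨hintg, ?_⟩
  -- compute the integral
  have hsqrt : Real.sqrt (π / b) = Real.sqrt (2 * π * σ ^ 2) := by
    congr 1
    rw [hbdef, div_eq_mul_inv, inv_inv]
    ring
  have hc0 : c0 * Real.sqrt (2 * π * σ ^ 2) = 1 := by
    refine inv_mul_cancel₀ ?_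
    refine (Real.sqrt_ne_zero' ).2 ?_
    positivity
  have h2b : ((2 * b)⁻¹ : ℝ) = σ ^ 2 := by
    have hσ0 : σ ≠ 0 := hσ.ne'
    rw [hbdef]
    field_simp
  rw [integral_gaussianReal_eq μ hv]
  have hshift := integral_add_right_eq_self (μ := volume)
    (fun x => gaussianPDFReal μ v x * (α * x ^ 2 + β * x + γ)) μ
  rw [← hshift]
  calc ∫ y : ℝ, gaussianPDFReal μ v (y + μ) * (α * (y + μ) ^ 2 + β * (y + μ) + γ)
      = ∫ y : ℝ, c0 * ((α * y ^ 2 + (2 * α * μ + β) * y + (α * μ ^ 2 + β * μ + γ))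
          * rexp (-b * y ^ 2)) :=
        integral_congr_ae (ae_of_all _ fun y => hkey y)
    _ = c0 * (α * ((2 * b)⁻¹ * Real.sqrt (π / b))
          + (α * μ ^ 2 + β * μ + γ) * Real.sqrt (π / b)) := by
        rw [MeasureTheory.integral_const_mul, integral_exp_poly hb]
    _ = α * (σ ^ 2 + μ ^ 2) + β * μ + γ := by
        rw [hsqrt, h2b]
        linear_combination (α * σ ^ 2 + (α * μ ^ 2 + β * μ + γ)) * hc0

end Aux

theorem stmt2 (μe μd C A σe σd σW : ℝ)
    (hσe : 0 < σe) (hσd : 0 < σd) (hσW : 0 < σW) :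
    let δ : ℝ := μe - μd
    let K : ℝ := A * σd ^ 2 / (A ^ 2 * σd ^ 2 + σW ^ 2)
    let L : ℝ := (σW ^ 2 * μd - A * C * σd ^ 2) / (A ^ 2 * σd ^ 2 + σW ^ 2)
    let ν : Measure (ℝ × ℝ) :=
      (gaussianReal μe ⟨σe ^ 2, sq_nonneg σe⟩).prod (gaussianReal 0 ⟨σW ^ 2, sq_nonneg σW⟩)
    ∫ p, (p.1 - (K * (A * p.1 + C + p.2) + L)) ^ 2 ∂ν
      = (A ^ 2 * σd ^ 4 * σW ^ 2 + σW ^ 4 * (σe ^ 2 + δ ^ 2))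
          / (A ^ 2 * σd ^ 2 + σW ^ 2) ^ 2 := by
  intro δ K L ν
  have hδ : δ = μe - μd := rfl
  have hK : K = A * σd ^ 2 / (A ^ 2 * σd ^ 2 + σW ^ 2) := rfl
  have hL : L = (σW ^ 2 * μd - A * C * σd ^ 2) / (A ^ 2 * σd ^ 2 + σW ^ 2) := rfl
  have hν : ν = (gaussianReal μe ⟨σe ^ 2, sq_nonneg σe⟩).prod
      (gaussianReal 0 ⟨σW ^ 2, sq_nonneg σW⟩) := rfl
  haveI := instIsProbabilityMeasureGaussianReal μe ⟨σe ^ 2, sq_nonneg σe⟩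
  haveI := instIsProbabilityMeasureGaussianReal 0 ⟨σW ^ 2, sq_nonneg σW⟩
  have hF1 := gauss_poly μe σe hσe ((1 - K * A) ^ 2)
    (2 * (1 - K * A) * (-(K * C + L))) ((K * C + L) ^ 2)
  have hF2 := gauss_poly μe σe hσe 0 (1 - K * A) (-(K * C + L))
  have hF3 := gauss_poly μe σe hσe 0 0 1
  have hG1 := gauss_poly 0 σW hσW 0 0 1
  have hG2 := gauss_poly 0 σW hσW 0 (-2 * K) 0
  have hG3 := gauss_poly 0 σW hσW (K ^ 2) 0 0
  have h1 : Integrable (fun p : ℝ × ℝ =>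
      ((1 - K * A) ^ 2 * p.1 ^ 2 + 2 * (1 - K * A) * (-(K * C + L)) * p.1 + (K * C + L) ^ 2)
        * (0 * p.2 ^ 2 + 0 * p.2 + 1)) ν := hF1.1.mul_prod hG1.1
  have h2 : Integrable (fun p : ℝ × ℝ =>
      (0 * p.1 ^ 2 + (1 - K * A) * p.1 + -(K * C + L))
        * (0 * p.2 ^ 2 + -2 * K * p.2 + 0)) ν := hF2.1.mul_prod hG2.1
  have h3 : Integrable (fun p : ℝ × ℝ =>
      (0 * p.1 ^ 2 + 0 * p.1 + 1) * (K ^ 2 * p.2 ^ 2 + 0 * p.2 + 0)) ν := hF3.1.mul_prod hG3.1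
  have h23 : Integrable (fun p : ℝ × ℝ =>
      (0 * p.1 ^ 2 + (1 - K * A) * p.1 + -(K * C + L)) * (0 * p.2 ^ 2 + -2 * K * p.2 + 0)
      + (0 * p.1 ^ 2 + 0 * p.1 + 1) * (K ^ 2 * p.2 ^ 2 + 0 * p.2 + 0)) ν := h2.add h3
  have hD : (0:ℝ) < A ^ 2 * σd ^ 2 + σW ^ 2 := by positivity
  calc ∫ p, (p.1 - (K * (A * p.1 + C + p.2) + L)) ^ 2 ∂ν
      = ∫ p : ℝ × ℝ,
          (((1 - K * A) ^ 2 * p.1 ^ 2 + 2 * (1 - K * A) * (-(K * C + L)) * p.1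
              + (K * C + L) ^ 2) * (0 * p.2 ^ 2 + 0 * p.2 + 1)
          + ((0 * p.1 ^ 2 + (1 - K * A) * p.1 + -(K * C + L))
              * (0 * p.2 ^ 2 + -2 * K * p.2 + 0)
            + (0 * p.1 ^ 2 + 0 * p.1 + 1) * (K ^ 2 * p.2 ^ 2 + 0 * p.2 + 0))) ∂ν := by
        refine integral_congr_ae (ae_of_all _ fun p => ?_)
        ring
    _ = (∫ p : ℝ × ℝ,
          ((1 - K * A) ^ 2 * p.1 ^ 2 + 2 * (1 - K * A) * (-(K * C + L)) * p.1
              + (K * C + L) ^ 2) * (0 * p.2 ^ 2 + 0 * p.2 + 1) ∂ν)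
        + ∫ p : ℝ × ℝ,
          ((0 * p.1 ^ 2 + (1 - K * A) * p.1 + -(K * C + L))
              * (0 * p.2 ^ 2 + -2 * K * p.2 + 0)
            + (0 * p.1 ^ 2 + 0 * p.1 + 1) * (K ^ 2 * p.2 ^ 2 + 0 * p.2 + 0)) ∂ν :=
        integral_add h1 h23
    _ = (∫ p : ℝ × ℝ,
          ((1 - K * A) ^ 2 * p.1 ^ 2 + 2 * (1 - K * A) * (-(K * C + L)) * p.1
              + (K * C + L) ^ 2) * (0 * p.2 ^ 2 + 0 * p.2 + 1) ∂ν)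
        + ((∫ p : ℝ × ℝ, (0 * p.1 ^ 2 + (1 - K * A) * p.1 + -(K * C + L))
              * (0 * p.2 ^ 2 + -2 * K * p.2 + 0) ∂ν)
          + ∫ p : ℝ × ℝ, (0 * p.1 ^ 2 + 0 * p.1 + 1)
              * (K ^ 2 * p.2 ^ 2 + 0 * p.2 + 0) ∂ν) :=
        congrArg _ (integral_add h2 h3)
    _ = (∫ x, ((1 - K * A) ^ 2 * x ^ 2 + 2 * (1 - K * A) * (-(K * C + L)) * x
              + (K * C + L) ^ 2) ∂(gaussianReal μe ⟨σe ^ 2, sq_nonneg σe⟩))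
            * (∫ y, (0 * y ^ 2 + 0 * y + 1) ∂(gaussianReal 0 ⟨σW ^ 2, sq_nonneg σW⟩))
        + ((∫ x, (0 * x ^ 2 + (1 - K * A) * x + -(K * C + L))
              ∂(gaussianReal μe ⟨σe ^ 2, sq_nonneg σe⟩))
            * (∫ y, (0 * y ^ 2 + -2 * K * y + 0) ∂(gaussianReal 0 ⟨σW ^ 2, sq_nonneg σW⟩))
          + (∫ x, (0 * x ^ 2 + 0 * x + 1) ∂(gaussianReal μe ⟨σe ^ 2, sq_nonneg σe⟩))
            * (∫ y, (K ^ 2 * y ^ 2 + 0 * y + 0) ∂(gaussianReal 0 ⟨σW ^ 2, sq_nonneg σW⟩))) := by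
        have e1 := integral_prod_mul (μ := gaussianReal μe ⟨σe ^ 2, sq_nonneg σe⟩)
          (ν := gaussianReal 0 ⟨σW ^ 2, sq_nonneg σW⟩)
          (fun x : ℝ => (1 - K * A) ^ 2 * x ^ 2 + 2 * (1 - K * A) * (-(K * C + L)) * x
              + (K * C + L) ^ 2)
          (fun y : ℝ => 0 * y ^ 2 + 0 * y + 1)
        have e2 := integral_prod_mul (μ := gaussianReal μe ⟨σe ^ 2, sq_nonneg σe⟩)
          (ν := gaussianReal 0 ⟨σW ^ 2, sq_nonneg σW⟩)
          (fun x : ℝ => 0 * x ^ 2 + (1 - K * A) * x + -(K * C + L))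
          (fun y : ℝ => 0 * y ^ 2 + -2 * K * y + 0)
        have e3 := integral_prod_mul (μ := gaussianReal μe ⟨σe ^ 2, sq_nonneg σe⟩)
          (ν := gaussianReal 0 ⟨σW ^ 2, sq_nonneg σW⟩)
          (fun x : ℝ => 0 * x ^ 2 + 0 * x + 1)
          (fun y : ℝ => K ^ 2 * y ^ 2 + 0 * y + 0)
        exact congrArg₂ (· + ·) e1 (congrArg₂ (· + ·) e2 e3)
    _ = ((1 - K * A) ^ 2 * (σe ^ 2 + μe ^ 2) + 2 * (1 - K * A) * (-(K * C + L)) * μe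
            + (K * C + L) ^ 2) * (0 * (σW ^ 2 + 0 ^ 2) + 0 * 0 + 1)
        + ((0 * (σe ^ 2 + μe ^ 2) + (1 - K * A) * μe + -(K * C + L))
            * (0 * (σW ^ 2 + 0 ^ 2) + -2 * K * 0 + 0)
          + (0 * (σe ^ 2 + μe ^ 2) + 0 * μe + 1)
            * (K ^ 2 * (σW ^ 2 + 0 ^ 2) + 0 * 0 + 0)) := by
        rw [hF1.2, hF2.2, hF3.2, hG1.2, hG2.2, hG3.2]
    _ = (A ^ 2 * σd ^ 4 * σW ^ 2 + σW ^ 4 * (σe ^ 2 + δ ^ 2))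
          / (A ^ 2 * σd ^ 2 + σW ^ 2) ^ 2 := by
        rw [hK, hL, hδ]
        field_simp
        ring
end

section
/- Let σ_e, σ_d, σ_W > 0, λ > 0, δ ∈ ℝ, and define f : [0,∞) → ℝ by f(t) = σ_W⁴(σ_e² + δ² − σ_d²)/(tσ_d² + σ_W²)² + σ_d²σ_W²/(tσ_d² + σ_W²) + λσ_e²t. If λσ_e²σ_W² < σ_d²(2σ_e² + 2δ² − σ_d²), then there exists t > 0 with f(t) < f(0). -/
theorem stmt3 (σe σd σW lam δ : ℝ)
    (hσe : 0 < σe) (hσd : 0 < σd) (hσW : 0 < σW) (hlam : 0 < lam)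
    (h : lam * σe ^ 2 * σW ^ 2 < σd ^ 2 * (2 * σe ^ 2 + 2 * δ ^ 2 - σd ^ 2)) :
    let f : ℝ → ℝ := fun t =>
      σW ^ 4 * (σe ^ 2 + δ ^ 2 - σd ^ 2) / (t * σd ^ 2 + σW ^ 2) ^ 2
        + σd ^ 2 * σW ^ 2 / (t * σd ^ 2 + σW ^ 2) + lam * σe ^ 2 * t
    ∃ t > (0 : ℝ), f t < f 0 := by
  intro f
  set D : ℝ := σd ^ 2 * (2 * σe ^ 2 + 2 * δ ^ 2 - σd ^ 2) - lam * σe ^ 2 * σW ^ 2 with hDdef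
  have hD : 0 < D := by linarith
  set C2 : ℝ := σd ^ 2 * (2 * lam * σe ^ 2 * σW ^ 2 - (σe ^ 2 + δ ^ 2) * σd ^ 2) with hC2def
  set C3 : ℝ := lam * σe ^ 2 * σd ^ 4 with hC3def
  have hC3 : 0 < C3 := by positivity
  set B : ℝ := |C2| + C3 + 1 with hBdef
  have hB : 0 < B := by
    have := abs_nonneg C2
    linarith
  set t : ℝ := min 1 (σW ^ 2 * D / (2 * B)) with htdef
  have ht0 : 0 < t := by
    apply lt_min one_pos
    positivity
  have ht1 : t ≤ 1 := min_le_left _ _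
  have ht2 : 2 * B * t ≤ σW ^ 2 * D := by
    have := min_le_right 1 (σW ^ 2 * D / (2 * B))
    have h2B : 0 < 2 * B := by linarith
    calc 2 * B * t ≤ 2 * B * (σW ^ 2 * D / (2 * B)) := by
          apply mul_le_mul_of_nonneg_left this (le_of_lt h2B)
      _ = σW ^ 2 * D := by field_simp
  refine ⟨t, ht0, ?_⟩
  have hs : (0 : ℝ) < t * σd ^ 2 + σW ^ 2 := by positivity
  have hsne : t * σd ^ 2 + σW ^ 2 ≠ 0 := ne_of_gt hs
  have hWne : σW ≠ 0 := ne_of_gt hσW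
  have key : f t - f 0 = t * (C3 * t ^ 2 + C2 * t - σW ^ 2 * D) / (t * σd ^ 2 + σW ^ 2) ^ 2 := by
    show (σW ^ 4 * (σe ^ 2 + δ ^ 2 - σd ^ 2) / (t * σd ^ 2 + σW ^ 2) ^ 2
        + σd ^ 2 * σW ^ 2 / (t * σd ^ 2 + σW ^ 2) + lam * σe ^ 2 * t)
      - (σW ^ 4 * (σe ^ 2 + δ ^ 2 - σd ^ 2) / (0 * σd ^ 2 + σW ^ 2) ^ 2
        + σd ^ 2 * σW ^ 2 / (0 * σd ^ 2 + σW ^ 2) + lam * σe ^ 2 * 0) = _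
    rw [hC3def, hC2def, hDdef]
    field_simp
    ring
  have hnum : C3 * t ^ 2 + C2 * t - σW ^ 2 * D < 0 := by
    have habs : C2 * t ≤ |C2| * t :=
      mul_le_mul_of_nonneg_right (le_abs_self C2) (le_of_lt ht0)
    have hsq : t ^ 2 ≤ t := by nlinarith
    have h1 : C3 * t ^ 2 ≤ C3 * t := mul_le_mul_of_nonneg_left hsq (le_of_lt hC3)
    nlinarith
  have : f t - f 0 < 0 := by
    rw [key]
    apply div_neg_of_neg_of_pos
    · exact mul_neg_of_pos_of_neg ht0 hnum
    · positivity
  linarith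
end

section
/- Let σ_e, σ_d, σ_W > 0, λ > 0, δ ∈ ℝ, and define f : [0,∞) → ℝ by f(t) = σ_W⁴(σ_e² + δ² − σ_d²)/(tσ_d² + σ_W²)² + σ_d²σ_W²/(tσ_d² + σ_W²) + λσ_e²t. Suppose λσ_e²σ_W² ≥ σ_d²(2σ_e² + 2δ² − σ_d²), 3(σ_e² + δ²) < 2σ_d², and 4λσ_e²σ_W²(σ_d² − σ_e² − δ²) ≤ σ_d²(σ_e² + δ²)². Then there exists t > 0 with f(t) = f(0). -/
theorem stmt4 (σe σd σW lam δ : ℝ)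
    (hσe : 0 < σe) (hσd : 0 < σd) (hσW : 0 < σW) (hlam : 0 < lam)
    (h1 : lam * σe ^ 2 * σW ^ 2 ≥ σd ^ 2 * (2 * σe ^ 2 + 2 * δ ^ 2 - σd ^ 2))
    (h2 : 3 * (σe ^ 2 + δ ^ 2) < 2 * σd ^ 2)
    (h3 : 4 * lam * σe ^ 2 * σW ^ 2 * (σd ^ 2 - σe ^ 2 - δ ^ 2)
        ≤ σd ^ 2 * (σe ^ 2 + δ ^ 2) ^ 2) :
    let f : ℝ → ℝ := fun t =>
      σW ^ 4 * (σe ^ 2 + δ ^ 2 - σd ^ 2) / (t * σd ^ 2 + σW ^ 2) ^ 2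
        + σd ^ 2 * σW ^ 2 / (t * σd ^ 2 + σW ^ 2) + lam * σe ^ 2 * t
    ∃ t > (0 : ℝ), f t = f 0 := by
  intro f
  obtain ⟨P, hP, hPpos⟩ : ∃ P, P = σe ^ 2 + δ ^ 2 ∧ 0 < P :=
    ⟨σe ^ 2 + δ ^ 2, rfl, by positivity⟩
  obtain ⟨c, hcσ, hcpos⟩ : ∃ c, c * σd ^ 2 = lam * σe ^ 2 * σW ^ 2 ∧ 0 < c :=
    ⟨lam * σe ^ 2 * σW ^ 2 / σd ^ 2, by field_simp, by positivity⟩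
  have h3' : 4 * (c * σd ^ 2) * (σd ^ 2 - P) ≤ σd ^ 2 * P ^ 2 := by
    rw [hcσ, hP]; ring_nf; ring_nf at h3; linarith
  have hD : 0 ≤ P ^ 2 - 4 * c * (σd ^ 2 - P) := by
    nlinarith [h3', pow_pos hσd 2]
  have h2c : 2 * c < P := by
    nlinarith [hD, mul_pos hcpos hPpos]
  obtain ⟨r, hr2, hrpos⟩ : ∃ r, r ^ 2 = P ^ 2 - 4 * c * (σd ^ 2 - P) ∧ 0 ≤ r :=
    ⟨Real.sqrt _, Real.sq_sqrt hD, Real.sqrt_nonneg _⟩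
  obtain ⟨s, hs2c, hspos⟩ : ∃ s, 2 * c * s = P - 2 * c + r ∧ 0 < s :=
    ⟨(P - 2 * c + r) / (2 * c), by field_simp, div_pos (by linarith) (by linarith)⟩
  have key : c * s ^ 2 + (2 * c - P) * s + (c - (2 * P - σd ^ 2)) = 0 := by
    have h4 : 4 * c * (c * s ^ 2 + (2 * c - P) * s + (c - (2 * P - σd ^ 2))) = 0 := by
      have hr2' : (2 * c * s - P + 2 * c) ^ 2 = P ^ 2 - 4 * c * (σd ^ 2 - P) := by
        rw [show 2 * c * s - P + 2 * c = r by linarith]; exact hr2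
      linear_combination hr2'
    have := mul_eq_zero.mp h4
    rcases this with h | h
    · exact absurd h (by positivity)
    · exact h
  have h1s : (0:ℝ) < 1 + s := by linarith
  have hlam2 : lam * σe ^ 2 = c * σd ^ 2 / σW ^ 2 := by
    field_simp; linear_combination -hcσ
  refine ⟨s * σW ^ 2 / σd ^ 2, by positivity, ?_⟩
  show _ = _
  simp only [f]
  have hu : s * σW ^ 2 / σd ^ 2 * σd ^ 2 + σW ^ 2 = σW ^ 2 * (1 + s) := by
    field_simp; ring
  rw [hu, hlam2]
  have e0 : σW ^ 4 * (σe ^ 2 + δ ^ 2 - σd ^ 2) / (0 * σd ^ 2 + σW ^ 2) ^ 2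
      + σd ^ 2 * σW ^ 2 / (0 * σd ^ 2 + σW ^ 2) + c * σd ^ 2 / σW ^ 2 * 0 = P := by
    rw [hP]; field_simp; ring
  rw [e0]
  have e1 : σW ^ 4 * (σe ^ 2 + δ ^ 2 - σd ^ 2) / (σW ^ 2 * (1 + s)) ^ 2
      + σd ^ 2 * σW ^ 2 / (σW ^ 2 * (1 + s)) + c * σd ^ 2 / σW ^ 2 * (s * σW ^ 2 / σd ^ 2)
      = (P - σd ^ 2) / (1 + s) ^ 2 + σd ^ 2 / (1 + s) + c * s := by
    rw [hP]; field_simp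
  rw [e1]
  field_simp
  linear_combination s * key
end

section
/- Let σ_e, σ_d, σ_W > 0, λ > 0, δ ∈ ℝ, and define f : [0,∞) → ℝ by f(t) = σ_W⁴(σ_e² + δ² − σ_d²)/(tσ_d² + σ_W²)² + σ_d²σ_W²/(tσ_d² + σ_W²) + λσ_e²t. If λσ_e²σ_W² ≥ σ_d²(2σ_e² + 2δ² − σ_d²) and 3(σ_e² + δ²) ≥ 2σ_d², then f(t) > f(0) for all t > 0. -/
theorem stmt5 (σe σd σW lam δ : ℝ)
    (hσe : 0 < σe) (hσd : 0 < σd) (hσW : 0 < σW) (hlam : 0 < lam)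
    (h1 : lam * σe ^ 2 * σW ^ 2 ≥ σd ^ 2 * (2 * σe ^ 2 + 2 * δ ^ 2 - σd ^ 2))
    (h2 : 3 * (σe ^ 2 + δ ^ 2) ≥ 2 * σd ^ 2) :
    let f : ℝ → ℝ := fun t =>
      σW ^ 4 * (σe ^ 2 + δ ^ 2 - σd ^ 2) / (t * σd ^ 2 + σW ^ 2) ^ 2
        + σd ^ 2 * σW ^ 2 / (t * σd ^ 2 + σW ^ 2) + lam * σe ^ 2 * t
    ∀ t > (0 : ℝ), f t > f 0 := by
  intro f t ht
  have hs : 0 < t * σd ^ 2 + σW ^ 2 := by positivity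
  have hW : 0 < σW ^ 2 := by positivity
  show f 0 < f t
  simp only [f]
  rw [← sub_pos]
  have key : σW ^ 4 * (σe ^ 2 + δ ^ 2 - σd ^ 2) / (t * σd ^ 2 + σW ^ 2) ^ 2
        + σd ^ 2 * σW ^ 2 / (t * σd ^ 2 + σW ^ 2) + lam * σe ^ 2 * t
      - (σW ^ 4 * (σe ^ 2 + δ ^ 2 - σd ^ 2) / (0 * σd ^ 2 + σW ^ 2) ^ 2
        + σd ^ 2 * σW ^ 2 / (0 * σd ^ 2 + σW ^ 2) + lam * σe ^ 2 * 0)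
      = (t * (σW ^ 2 * (lam * σe ^ 2 * σW ^ 2 - σd ^ 2 * (2 * σe ^ 2 + 2 * δ ^ 2 - σd ^ 2)))
         + t ^ 2 * (σd ^ 2 * (2 * lam * σe ^ 2 * σW ^ 2 - (σe ^ 2 + δ ^ 2) * σd ^ 2))
         + t ^ 3 * (lam * σe ^ 2 * σd ^ 4)) / (t * σd ^ 2 + σW ^ 2) ^ 2 := by
    field_simp
    ring
  rw [key]
  apply div_pos _ (by positivity)
  have c1 : 0 ≤ σW ^ 2 * (lam * σe ^ 2 * σW ^ 2 - σd ^ 2 * (2 * σe ^ 2 + 2 * δ ^ 2 - σd ^ 2)) := by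
    have := sub_nonneg.mpr h1
    positivity
  have c2 : 0 ≤ σd ^ 2 * (2 * lam * σe ^ 2 * σW ^ 2 - (σe ^ 2 + δ ^ 2) * σd ^ 2) := by
    nlinarith [mul_nonneg (sq_nonneg σd) (sub_nonneg.mpr h2), h1, sq_nonneg σd]
  have c3 : 0 < t ^ 3 * (lam * σe ^ 2 * σd ^ 4) := by positivity
  nlinarith [mul_nonneg (le_of_lt ht) c1, mul_nonneg (sq_nonneg t) c2]
end

section
/- Let σ_e, σ_d, σ_W > 0, λ > 0, δ ∈ ℝ, and define f : [0,∞) → ℝ by f(t) = σ_W⁴(σ_e² + δ² − σ_d²)/(tσ_d² + σ_W²)² + σ_d²σ_W²/(tσ_d² + σ_W²) + λσ_e²t. If λσ_e²σ_W² ≥ σ_d²(2σ_e² + 2δ² − σ_d²), 3(σ_e² + δ²) < 2σ_d², and 4λσ_e²σ_W²(σ_d² − σ_e² − δ²) > σ_d²(σ_e² + δ²)², then f(t) > f(0) for all t > 0. -/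
theorem stmt6 (σe σd σW lam δ : ℝ)
    (hσe : 0 < σe) (hσd : 0 < σd) (hσW : 0 < σW) (hlam : 0 < lam)
    (h1 : lam * σe ^ 2 * σW ^ 2 ≥ σd ^ 2 * (2 * σe ^ 2 + 2 * δ ^ 2 - σd ^ 2))
    (h2 : 3 * (σe ^ 2 + δ ^ 2) < 2 * σd ^ 2)
    (h3 : 4 * lam * σe ^ 2 * σW ^ 2 * (σd ^ 2 - σe ^ 2 - δ ^ 2)
        > σd ^ 2 * (σe ^ 2 + δ ^ 2) ^ 2) :
    let f : ℝ → ℝ := fun t =>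
      σW ^ 4 * (σe ^ 2 + δ ^ 2 - σd ^ 2) / (t * σd ^ 2 + σW ^ 2) ^ 2
        + σd ^ 2 * σW ^ 2 / (t * σd ^ 2 + σW ^ 2) + lam * σe ^ 2 * t
    ∀ t > (0 : ℝ), f t > f 0 := by
  intro f t ht
  have hD : (0:ℝ) < t * σd ^ 2 + σW ^ 2 := by positivity
  have hD' : t * σd ^ 2 + σW ^ 2 ≠ 0 := ne_of_gt hD
  have hW : σW ^ 2 ≠ 0 := by positivity
  have h0 : f 0 = σe ^ 2 + δ ^ 2 := by
    simp only [f]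
    field_simp
    ring
  have key : f t - (σe ^ 2 + δ ^ 2) =
      t * (lam * σe ^ 2 * σd ^ 4 * t ^ 2
        + σd ^ 2 * (2 * lam * σe ^ 2 * σW ^ 2 - (σe ^ 2 + δ ^ 2) * σd ^ 2) * t
        + σW ^ 2 * (σd ^ 4 + lam * σe ^ 2 * σW ^ 2 - 2 * (σe ^ 2 + δ ^ 2) * σd ^ 2))
      / (t * σd ^ 2 + σW ^ 2) ^ 2 := by
    simp only [f]
    field_simp
    ring
  have hg : 0 < lam * σe ^ 2 * σd ^ 4 * t ^ 2
        + σd ^ 2 * (2 * lam * σe ^ 2 * σW ^ 2 - (σe ^ 2 + δ ^ 2) * σd ^ 2) * t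
        + σW ^ 2 * (σd ^ 4 + lam * σe ^ 2 * σW ^ 2 - 2 * (σe ^ 2 + δ ^ 2) * σd ^ 2) := by
    have hL : 0 < lam * σe ^ 2 := by positivity
    have hs3 : 0 < σd ^ 2 * σd ^ 2 * σd ^ 2 := by positivity
    nlinarith [sq_nonneg (2 * lam * σe ^ 2 * σd ^ 2 * t
        + (2 * lam * σe ^ 2 * σW ^ 2 - (σe ^ 2 + δ ^ 2) * σd ^ 2)),
      h3, mul_pos hs3 (sub_pos.mpr h3), hL, sq_nonneg t]
  have : 0 < f t - (σe ^ 2 + δ ^ 2) := by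
    rw [key]
    positivity
  linarith [this, h0.symm ▸ this]
end

section
/- Let σ_e, σ_d, σ_W > 0, δ ∈ ℝ, P̄ > 0, and define g : [0,∞) → ℝ by g(t) = (tσ_d⁴σ_W² + σ_W⁴(σ_e² + δ²))/(tσ_d² + σ_W²)². If σ_e²/(σ_e² + δ²) − 2σ_e²/σ_d² ≤ P̄/σ_W², then g(P̄/σ_e²) ≤ g(t) for every t ∈ [0, P̄/σ_e²]. -/
lemma aux7 (σd σW K T t : ℝ) (hσd : 0 < σd) (hσW : 0 < σW) (hK : 0 < K)
    (ht0 : 0 ≤ t) (htT : t ≤ T)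
    (H : σd ^ 2 * σW ^ 2 ≤ K * σd ^ 2 * T + 2 * K * σW ^ 2) :
    (T * σd ^ 4 * σW ^ 2 + σW ^ 4 * K) / (T * σd ^ 2 + σW ^ 2) ^ 2 ≤
      (t * σd ^ 4 * σW ^ 2 + σW ^ 4 * K) / (t * σd ^ 2 + σW ^ 2) ^ 2 := by
  have hT0 : 0 ≤ T := le_trans ht0 htT
  have hdt : 0 < (t * σd ^ 2 + σW ^ 2) ^ 2 := by positivity
  have hdT : 0 < (T * σd ^ 2 + σW ^ 2) ^ 2 := by positivity
  rw [div_le_div_iff₀ hdT hdt]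
  have hlin : 0 ≤ (T * σd ^ 4 * σW ^ 2 + σW ^ 4 * K) * σd ^ 4 * t +
      σW ^ 4 * σd ^ 2 * (K * σd ^ 2 * T + 2 * K * σW ^ 2 - σd ^ 2 * σW ^ 2) :=
    add_nonneg (by positivity)
      (mul_nonneg (by positivity) (by linarith))
  nlinarith [mul_nonneg (sub_nonneg.2 htT) hlin]

theorem stmt7 (σe σd σW δ Pbar : ℝ)
    (hσe : 0 < σe) (hσd : 0 < σd) (hσW : 0 < σW) (hP : 0 < Pbar)
    (h : σe ^ 2 / (σe ^ 2 + δ ^ 2) - 2 * σe ^ 2 / σd ^ 2 ≤ Pbar / σW ^ 2) :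
    let g : ℝ → ℝ := fun t =>
      (t * σd ^ 4 * σW ^ 2 + σW ^ 4 * (σe ^ 2 + δ ^ 2)) / (t * σd ^ 2 + σW ^ 2) ^ 2
    ∀ t ∈ Set.Icc (0 : ℝ) (Pbar / σe ^ 2), g (Pbar / σe ^ 2) ≤ g t := by
  intro g t ht
  have hK : 0 < σe ^ 2 + δ ^ 2 := by positivity
  rw [div_sub_div _ _ (ne_of_gt hK) (by positivity),
    div_le_div_iff₀ (by positivity) (by positivity)] at h
  have H : σd ^ 2 * σW ^ 2 ≤ (σe ^ 2 + δ ^ 2) * σd ^ 2 * (Pbar / σe ^ 2)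
      + 2 * (σe ^ 2 + δ ^ 2) * σW ^ 2 := by
    have h1 : σd ^ 2 * σW ^ 2 - 2 * (σe ^ 2 + δ ^ 2) * σW ^ 2 ≤
        (σe ^ 2 + δ ^ 2) * σd ^ 2 * Pbar / σe ^ 2 := by
      rw [le_div_iff₀ (by positivity : (0:ℝ) < σe ^ 2)]
      nlinarith [h]
    have h2 : (σe ^ 2 + δ ^ 2) * σd ^ 2 * Pbar / σe ^ 2 =
        (σe ^ 2 + δ ^ 2) * σd ^ 2 * (Pbar / σe ^ 2) := by ring
    linarith [h1, h2.le, h2.ge]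
  exact aux7 σd σW _ _ t hσd hσW hK ht.1 ht.2 H
end

section
/- Let σ_e, σ_d, σ_W > 0, δ ∈ ℝ, P̄ > 0, and define g : [0,∞) → ℝ by g(t) = (tσ_d⁴σ_W² + σ_W⁴(σ_e² + δ²))/(tσ_d² + σ_W²)². If σ_e²/(σ_e² + δ²) − 2σ_e²/σ_d² > P̄/σ_W², then g(t) > g(0) for every t ∈ (0, P̄/σ_e²]. -/
theorem stmt8 (σe σd σW δ Pbar : ℝ)
    (hσe : 0 < σe) (hσd : 0 < σd) (hσW : 0 < σW) (hP : 0 < Pbar)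
    (h : σe ^ 2 / (σe ^ 2 + δ ^ 2) - 2 * σe ^ 2 / σd ^ 2 > Pbar / σW ^ 2) :
    let g : ℝ → ℝ := fun t =>
      (t * σd ^ 4 * σW ^ 2 + σW ^ 4 * (σe ^ 2 + δ ^ 2)) / (t * σd ^ 2 + σW ^ 2) ^ 2
    ∀ t ∈ Set.Ioc (0 : ℝ) (Pbar / σe ^ 2), g t > g 0 := by
  intro g t ht
  obtain ⟨ht0, ht1⟩ := ht
  have hS : (0:ℝ) < σe ^ 2 + δ ^ 2 := by positivity
  have hden : (0:ℝ) < (t * σd ^ 2 + σW ^ 2) ^ 2 := by positivity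
  have hg0 : g 0 = σe ^ 2 + δ ^ 2 := by
    show (0 * σd ^ 4 * σW ^ 2 + σW ^ 4 * (σe ^ 2 + δ ^ 2)) / (0 * σd ^ 2 + σW ^ 2) ^ 2
        = σe ^ 2 + δ ^ 2
    field_simp
    ring
  have htP : t * σe ^ 2 ≤ Pbar := by
    rw [← le_div_iff₀ (by positivity)]; exact ht1
  have key : Pbar * ((σe ^ 2 + δ ^ 2) * σd ^ 2) <
      σe ^ 2 * σd ^ 2 * σW ^ 2 - 2 * σe ^ 2 * (σe ^ 2 + δ ^ 2) * σW ^ 2 := by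
    rw [gt_iff_lt, div_lt_iff₀ (by positivity : (0:ℝ) < σW ^ 2)] at h
    have h2 : (σe ^ 2 / (σe ^ 2 + δ ^ 2) - 2 * σe ^ 2 / σd ^ 2) * σW ^ 2
        * ((σe ^ 2 + δ ^ 2) * σd ^ 2)
        = σe ^ 2 * σd ^ 2 * σW ^ 2 - 2 * σe ^ 2 * (σe ^ 2 + δ ^ 2) * σW ^ 2 := by
      field_simp
    calc Pbar * ((σe ^ 2 + δ ^ 2) * σd ^ 2)
        < (σe ^ 2 / (σe ^ 2 + δ ^ 2) - 2 * σe ^ 2 / σd ^ 2) * σW ^ 2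
            * ((σe ^ 2 + δ ^ 2) * σd ^ 2) := by
          apply mul_lt_mul_of_pos_right h (by positivity)
      _ = _ := h2
  have step : t * (σe ^ 2 + δ ^ 2) * σd ^ 2 + 2 * (σe ^ 2 + δ ^ 2) * σW ^ 2
      < σd ^ 2 * σW ^ 2 := by
    have h3 : t * σe ^ 2 * ((σe ^ 2 + δ ^ 2) * σd ^ 2) ≤ Pbar * ((σe ^ 2 + δ ^ 2) * σd ^ 2) :=
      mul_le_mul_of_nonneg_right htP (by positivity)
    have h4 := lt_of_le_of_lt h3 key
    nlinarith [sq_nonneg σe, hσe.le, pow_pos hσe 2]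
  rw [hg0, gt_iff_lt, lt_div_iff₀ hden]
  have h5 : 0 < t * σd ^ 2 := by positivity
  nlinarith [mul_lt_mul_of_pos_left step h5]
end

section
/- Let σ_e, σ_d, σ_W > 0, δ ∈ ℝ, and define g : [0,∞) → ℝ by g(t) = (tσ_d⁴σ_W² + σ_W⁴(σ_e² + δ²))/(tσ_d² + σ_W²)². If σ_d² ≤ 2(σ_e² + δ²), then g is nonincreasing on [0,∞), and strictly decreasing on (0,∞). -/
theorem stmt9 (σe σd σW δ : ℝ)
    (hσe : 0 < σe) (hσd : 0 < σd) (hσW : 0 < σW)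
    (h : σd ^ 2 ≤ 2 * (σe ^ 2 + δ ^ 2)) :
    let g : ℝ → ℝ := fun t =>
      (t * σd ^ 4 * σW ^ 2 + σW ^ 4 * (σe ^ 2 + δ ^ 2)) / (t * σd ^ 2 + σW ^ 2) ^ 2
    AntitoneOn g (Set.Ici (0 : ℝ)) ∧ StrictAntiOn g (Set.Ioi (0 : ℝ)) := by
  intro g
  have hS : 0 < σe ^ 2 + δ ^ 2 := by positivity
  have key : ∀ a b : ℝ, 0 ≤ a → a ≤ b →
      (b - a) * σd ^ 2 * σW ^ 2 *
        (a * b * σd ^ 6 + σd ^ 2 * σW ^ 2 * (σe ^ 2 + δ ^ 2) * (a + b)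
          + σW ^ 4 * (2 * (σe ^ 2 + δ ^ 2) - σd ^ 2)) =
      (a * σd ^ 4 * σW ^ 2 + σW ^ 4 * (σe ^ 2 + δ ^ 2)) * (b * σd ^ 2 + σW ^ 2) ^ 2
        - (b * σd ^ 4 * σW ^ 2 + σW ^ 4 * (σe ^ 2 + δ ^ 2)) * (a * σd ^ 2 + σW ^ 2) ^ 2 := by
    intro a b _ _
    ring
  constructor
  · intro a ha b hb hab
    simp only [Set.mem_Ici] at ha hb
    have hDa : 0 < (a * σd ^ 2 + σW ^ 2) ^ 2 := by positivity
    have hDb : 0 < (b * σd ^ 2 + σW ^ 2) ^ 2 := by positivity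
    have hbr : 0 ≤ a * b * σd ^ 6 + σd ^ 2 * σW ^ 2 * (σe ^ 2 + δ ^ 2) * (a + b)
        + σW ^ 4 * (2 * (σe ^ 2 + δ ^ 2) - σd ^ 2) := by
      have h1 : 0 ≤ a * b * σd ^ 6 := by positivity
      have h2 : 0 ≤ σd ^ 2 * σW ^ 2 * (σe ^ 2 + δ ^ 2) * (a + b) := by
        have : 0 ≤ a + b := by linarith
        positivity
      have h3 : 0 ≤ σW ^ 4 * (2 * (σe ^ 2 + δ ^ 2) - σd ^ 2) := by
        have : 0 ≤ 2 * (σe ^ 2 + δ ^ 2) - σd ^ 2 := by linarith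
        positivity
      linarith
    have hfac : 0 ≤ (b - a) * σd ^ 2 * σW ^ 2 *
        (a * b * σd ^ 6 + σd ^ 2 * σW ^ 2 * (σe ^ 2 + δ ^ 2) * (a + b)
          + σW ^ 4 * (2 * (σe ^ 2 + δ ^ 2) - σd ^ 2)) := by
      have : 0 ≤ b - a := by linarith
      positivity
    have := key a b ha hab
    show (b * σd ^ 4 * σW ^ 2 + σW ^ 4 * (σe ^ 2 + δ ^ 2)) / (b * σd ^ 2 + σW ^ 2) ^ 2 ≤
      (a * σd ^ 4 * σW ^ 2 + σW ^ 4 * (σe ^ 2 + δ ^ 2)) / (a * σd ^ 2 + σW ^ 2) ^ 2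
    rw [div_le_div_iff₀ hDb hDa]
    linarith
  · intro a ha b hb hab
    simp only [Set.mem_Ioi] at ha hb
    have hDa : 0 < (a * σd ^ 2 + σW ^ 2) ^ 2 := by positivity
    have hDb : 0 < (b * σd ^ 2 + σW ^ 2) ^ 2 := by positivity
    have hbr : 0 < a * b * σd ^ 6 + σd ^ 2 * σW ^ 2 * (σe ^ 2 + δ ^ 2) * (a + b)
        + σW ^ 4 * (2 * (σe ^ 2 + δ ^ 2) - σd ^ 2) := by
      have h1 : 0 < a * b * σd ^ 6 := by positivity
      have h2 : 0 < σd ^ 2 * σW ^ 2 * (σe ^ 2 + δ ^ 2) * (a + b) := by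
        have : 0 < a + b := by linarith
        positivity
      have h3 : 0 ≤ σW ^ 4 * (2 * (σe ^ 2 + δ ^ 2) - σd ^ 2) := by
        have : 0 ≤ 2 * (σe ^ 2 + δ ^ 2) - σd ^ 2 := by linarith
        positivity
      linarith
    have hfac : 0 < (b - a) * σd ^ 2 * σW ^ 2 *
        (a * b * σd ^ 6 + σd ^ 2 * σW ^ 2 * (σe ^ 2 + δ ^ 2) * (a + b)
          + σW ^ 4 * (2 * (σe ^ 2 + δ ^ 2) - σd ^ 2)) := by
      have : 0 < b - a := by linarith
      positivity
    have := key a b (le_of_lt ha) (le_of_lt hab)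
    show (b * σd ^ 4 * σW ^ 2 + σW ^ 4 * (σe ^ 2 + δ ^ 2)) / (b * σd ^ 2 + σW ^ 2) ^ 2 <
      (a * σd ^ 4 * σW ^ 2 + σW ^ 4 * (σe ^ 2 + δ ^ 2)) / (a * σd ^ 2 + σW ^ 2) ^ 2
    rw [div_lt_div_iff₀ hDb hDa]
    linarith
end

section
/- Let λ > 0 and σ_d, σ_W > 0. There exist real numbers A ≠ 0 and K satisfying the pair of equations A = K/(K² + λ) and K = Aσ_d²/(A²σ_d² + σ_W²) if and only if λσ_W² < σ_d². Moreover, when λσ_W² < σ_d², every such solution satisfies A² = √(σ_W²/(λσ_d²)) − σ_W²/σ_d² and K = Aσ_d√λ/σ_W. -/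
lemma key11 (lam σd σW : ℝ) (hlam : 0 < lam) (hσd : 0 < σd) (hσW : 0 < σW)
    (A K : ℝ) (hA : A ≠ 0) (h1 : A = K / (K ^ 2 + lam))
    (h2 : K = A * σd ^ 2 / (A ^ 2 * σd ^ 2 + σW ^ 2)) :
    K = A * σd * Real.sqrt lam / σW ∧
      A ^ 2 = σW / (Real.sqrt lam * σd) - σW ^ 2 / σd ^ 2 := by
  obtain ⟨sL, hsL0, rfl⟩ : ∃ s, 0 < s ∧ lam = s ^ 2 :=
    ⟨Real.sqrt lam, Real.sqrt_pos.mpr hlam, (Real.sq_sqrt hlam.le).symm⟩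
  rw [Real.sqrt_sq hsL0.le] at *
  have hden1 : (0:ℝ) < K ^ 2 + sL ^ 2 := by positivity
  have hden2 : (0:ℝ) < A ^ 2 * σd ^ 2 + σW ^ 2 := by positivity
  have h1' : A * (K ^ 2 + sL ^ 2) = K := by
    rw [h1]; field_simp
  have h2' : K * (A ^ 2 * σd ^ 2 + σW ^ 2) = A * σd ^ 2 := by
    nth_rewrite 1 [h2]; field_simp
  have hK : K ≠ 0 := by
    intro h; rw [h] at h1'; simp at h1'
    rcases h1' with h | h
    · exact hA h
    · nlinarith
  have hsq : K ^ 2 * σW ^ 2 = A ^ 2 * sL ^ 2 * σd ^ 2 := by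
    linear_combination K * h2' - (A * σd ^ 2) * h1'
  have hAK : 0 < A * K := by
    have h : A * K = A ^ 2 * (K ^ 2 + sL ^ 2) := by linear_combination (-A) * h1'
    rw [h]
    have := pow_two_pos_of_ne_zero hA
    positivity
  have hc : 0 < K * (A * σd * sL / σW) := by
    have h : K * (A * σd * sL / σW) = (A * K) * (σd * sL / σW) := by ring
    rw [h]; positivity
  have hz : (K - A * σd * sL / σW) * (K + A * σd * sL / σW) = 0 := by
    have h : (K - A * σd * sL / σW) * (K + A * σd * sL / σW)
        = (K ^ 2 * σW ^ 2 - A ^ 2 * sL ^ 2 * σd ^ 2) / σW ^ 2 := by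
      field_simp; ring
    rw [h, hsq]; simp
  have hsum : K + A * σd * sL / σW ≠ 0 := by
    intro h
    have h' : A * σd * sL / σW = -K := by linarith
    rw [h'] at hc; nlinarith [sq_nonneg K]
  have hKeq : K = A * σd * sL / σW := by
    rcases mul_eq_zero.mp hz with h | h
    · linarith
    · exact absurd h hsum
  refine ⟨hKeq, ?_⟩
  have hA2 : A ^ 2 * (σd * sL / σW) ^ 2 + sL ^ 2 = σd * sL / σW := by
    have h := h1'
    rw [hKeq] at h
    have h' : A * (A ^ 2 * (σd * sL / σW) ^ 2 + sL ^ 2) = A * (σd * sL / σW) := by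
      linear_combination h
    exact mul_left_cancel₀ hA h'
  have hA2' : A ^ 2 * (σd ^ 2 * sL ^ 2) + sL ^ 2 * σW ^ 2 = σd * sL * σW := by
    apply mul_right_cancel₀ hσW.ne'
    field_simp at hA2
    linear_combination (sL*σW) * hA2
  field_simp
  have hcan : (A ^ 2 * (sL * σd * σd ^ 2) - (σW * σd ^ 2 - sL * σd * σW ^ 2)) * (sL * σW) = 0 := by
    linear_combination (σd * σW) * hA2'
  rcases mul_eq_zero.mp hcan with h | h
  · exact mul_left_cancel₀ hσd.ne' (by linear_combination h)
  · exact absurd h (by positivity)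

theorem stmt11 (lam σd σW : ℝ) (hlam : 0 < lam) (hσd : 0 < σd) (hσW : 0 < σW) :
    ((∃ A K : ℝ, A ≠ 0 ∧ A = K / (K ^ 2 + lam)
        ∧ K = A * σd ^ 2 / (A ^ 2 * σd ^ 2 + σW ^ 2))
      ↔ lam * σW ^ 2 < σd ^ 2)
    ∧ (lam * σW ^ 2 < σd ^ 2 →
        ∀ A K : ℝ, A ≠ 0 → A = K / (K ^ 2 + lam)
          → K = A * σd ^ 2 / (A ^ 2 * σd ^ 2 + σW ^ 2)
          → A ^ 2 = Real.sqrt (σW ^ 2 / (lam * σd ^ 2)) - σW ^ 2 / σd ^ 2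
            ∧ K = A * σd * Real.sqrt lam / σW) := by
  have key := key11 lam σd σW hlam hσd hσW
  obtain ⟨sL, hsL0, rfl⟩ : ∃ s, 0 < s ∧ lam = s ^ 2 :=
    ⟨Real.sqrt lam, Real.sqrt_pos.mpr hlam, (Real.sq_sqrt hlam.le).symm⟩
  rw [Real.sqrt_sq hsL0.le] at key ⊢
  have hsqrt : Real.sqrt (σW ^ 2 / (sL ^ 2 * σd ^ 2)) = σW / (sL * σd) := by
    have h : (σW / (sL * σd)) ^ 2 = σW ^ 2 / (sL ^ 2 * σd ^ 2) := by
      rw [div_pow, mul_pow]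
    rw [← h, Real.sqrt_sq (by positivity)]
  rw [hsqrt]
  constructor
  · constructor
    · rintro ⟨A, K, hA, h1, h2⟩
      obtain ⟨hKeq, hA2⟩ := key A K hA h1 h2
      have hApos : 0 < A ^ 2 := pow_two_pos_of_ne_zero hA
      rw [hA2] at hApos
      have h : σW ^ 2 / σd ^ 2 < σW / (sL * σd) := by linarith
      rw [div_lt_div_iff₀ (by positivity) (by positivity)] at h
      -- h : σW ^ 2 * (sL * σd) < σW * σd ^ 2
      have h' : sL * σW < σd := by
        by_contra hcon
        push_neg at hcon
        have h'' := mul_le_mul_of_nonneg_left hcon (mul_pos hσW hσd).le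
        nlinarith
      nlinarith [mul_pos (mul_pos hsL0 hσW) hσd]
    · intro hlt
      have hsW : sL * σW < σd := by
        by_contra hcon
        push_neg at hcon
        have h'' := mul_le_mul_of_nonneg_left hcon (by positivity : (0:ℝ) ≤ sL * σW)
        nlinarith
      have hE : 0 < σW / (sL * σd) - σW ^ 2 / σd ^ 2 := by
        rw [sub_pos, div_lt_div_iff₀ (by positivity) (by positivity)]
        have h'' := mul_lt_mul_of_pos_left hsW (mul_pos hσW hσd)
        nlinarith
      set A := Real.sqrt (σW / (sL * σd) - σW ^ 2 / σd ^ 2) with hAdef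
      have hApos : 0 < A := Real.sqrt_pos.mpr hE
      have hA2 : A ^ 2 = σW / (sL * σd) - σW ^ 2 / σd ^ 2 := Real.sq_sqrt hE.le
      have hA2' : A ^ 2 * (sL * σd * σd ^ 2) = σW * σd ^ 2 - sL * σd * σW ^ 2 := by
        rw [hA2]; field_simp
      refine ⟨A, A * σd * sL / σW, hApos.ne', ?_, ?_⟩
      · rw [eq_div_iff (by positivity : (0:ℝ) < (A * σd * sL / σW) ^ 2 + sL ^ 2).ne']
        have e1 : (A ^ 3 * σd ^ 2 * sL ^ 2 + A * sL ^ 2 * σW ^ 2) * σd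
            = (A * σd * sL * σW) * σd := by
          linear_combination (A * sL) * hA2'
        have e1' : A ^ 3 * σd ^ 2 * sL ^ 2 + A * sL ^ 2 * σW ^ 2 = A * σd * sL * σW :=
          mul_right_cancel₀ hσd.ne' e1
        field_simp
        exact mul_left_cancel₀ hσd.ne' (by linear_combination hA2')
      · rw [eq_div_iff (by positivity : (0:ℝ) < A ^ 2 * σd ^ 2 + σW ^ 2).ne']
        have e2 : (A ^ 3 * σd ^ 3 * sL + A * σd * sL * σW ^ 2) = A * σd ^ 2 * σW := by
          linear_combination A * hA2'
        field_simp
        exact mul_left_cancel₀ hσd.ne' (by linear_combination hA2')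
  · intro hlt A K hA h1 h2
    obtain ⟨hKeq, hA2⟩ := key A K hA h1 h2
    exact ⟨hA2, hKeq⟩
end

section
/- Let σ_e, σ_d, σ_W > 0, μ_e, μ_d ∈ ℝ, δ = μ_e − μ_d, P̄ > 0. Set A = √(P̄/(δ² + σ_e²)), C = −Aμ_d, K = Aσ_d²/(A²σ_d² + σ_W²), L = μ_d, and for (m,w) ∈ ℝ² define U(m,w) = K(Am + C + w) + L. Then: (i) the integral of (m − U(m,w))² with respect to (gaussianReal μ_e σ_e²) ⊗ (gaussianReal 0 σ_W²) equals σ_W²·(P̄σ_d⁴/(δ² + σ_e²) + (δ² + σ_e²)σ_W²)/(P̄σ_d²/(δ² + σ_e²) + σ_W²)²; and (ii) the integral of (m − U(m,w))² with respect to (gaussianReal μ_d σ_d²) ⊗ (gaussianReal 0 σ_W²) equals σ_d²σ_W²/(P̄σ_d²/(δ² + σ_e²) + σ_W²). -/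
open MeasureTheory ProbabilityTheory Real

namespace Stmt14Aux

lemma integral_x_mul_exp (b : ℝ) : ∫ x : ℝ, x * rexp (-b * x ^ 2) = 0 := by
  have h : (∫ x : ℝ, (-x) * rexp (-b * (-x) ^ 2)) = ∫ x : ℝ, x * rexp (-b * x ^ 2) :=
    integral_neg_eq_self (fun x : ℝ => x * rexp (-b * x ^ 2)) _
  simp only [neg_sq, neg_mul, integral_neg] at h
  simp only [neg_mul]
  linarith

lemma Gamma_three_half : Real.Gamma (3 / 2) = Real.sqrt π / 2 := by
  rw [show (3 / 2 : ℝ) = 1 / 2 + 1 by norm_num, Real.Gamma_add_one (by norm_num),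
    Real.Gamma_one_half_eq]
  ring

lemma integral_x_sq_mul_exp {b : ℝ} (hb : 0 < b) :
    ∫ x : ℝ, x ^ 2 * rexp (-b * x ^ 2) = Real.sqrt (π / b) / (2 * b) := by
  have h2 : ∀ x : ℝ, x ^ (2 : ℝ) = x ^ (2 : ℕ) := fun x => by
    rw [show (2 : ℝ) = ((2 : ℕ) : ℝ) by norm_num, Real.rpow_natCast]
  have hIoi : ∫ x in Set.Ioi (0 : ℝ), x ^ 2 * rexp (-b * x ^ 2)
      = b ^ (-(3 : ℝ) / 2) * (1 / 2) * Real.Gamma (3 / 2) := by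
    have h := integral_rpow_mul_exp_neg_mul_rpow (p := 2) (q := 2)
      (by norm_num) (by norm_num) hb
    simp only [h2] at h
    rw [h]
    norm_num
  have habs := integral_comp_abs (f := fun x : ℝ => x ^ 2 * rexp (-b * x ^ 2))
  simp only [sq_abs] at habs
  rw [habs, hIoi, Gamma_three_half]
  have hbne : b ≠ 0 := hb.ne'
  have hsb : Real.sqrt b ≠ 0 := by positivity
  have h3 : b ^ (-(3 : ℝ) / 2) = (b * Real.sqrt b)⁻¹ := by
    rw [show (-(3 : ℝ) / 2) = -(3 / 2 : ℝ) by norm_num, Real.rpow_neg hb.le]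
    congr 1
    rw [show (3 / 2 : ℝ) = 1 + 1 / 2 by norm_num, Real.rpow_add hb, Real.rpow_one,
      ← Real.sqrt_eq_rpow]
  have h4 : Real.sqrt (π / b) = Real.sqrt π / Real.sqrt b := Real.sqrt_div pi_pos.le b
  rw [h3, h4]
  have h5 : Real.sqrt b * Real.sqrt b = b := Real.mul_self_sqrt hb.le
  field_simp


lemma vne {σ : ℝ} (hσ : 0 < σ) : (⟨σ ^ 2, sq_nonneg σ⟩ : NNReal) ≠ 0 := by
  intro h
  have h2 := congrArg NNReal.toReal h
  have h3 : σ ^ 2 = 0 := h2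
  nlinarith

lemma pdf0_eq {σ : ℝ} (x : ℝ) :
    gaussianPDFReal 0 ⟨σ ^ 2, sq_nonneg σ⟩ x
      = (Real.sqrt (2 * π * σ ^ 2))⁻¹ * rexp (-(2 * σ ^ 2)⁻¹ * x ^ 2) := by
  unfold gaussianPDFReal
  show (√(2 * π * σ ^ 2))⁻¹ * rexp (-(x - 0) ^ 2 / (2 * σ ^ 2)) = _
  rw [sub_zero]
  congr 1
  ring

lemma integrable_I1 {σ : ℝ} (hσ : 0 < σ) :
    Integrable (fun x : ℝ => x * rexp (-(2 * σ ^ 2)⁻¹ * x ^ 2)) := by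
  have h := integrable_rpow_mul_exp_neg_mul_sq (b := (2 * σ ^ 2)⁻¹) (by positivity)
    (s := 1) (by norm_num)
  refine h.congr (ae_of_all _ fun x => ?_)
  simp

lemma integrable_I2 {σ : ℝ} (hσ : 0 < σ) :
    Integrable (fun x : ℝ => x ^ 2 * rexp (-(2 * σ ^ 2)⁻¹ * x ^ 2)) := by
  have h := integrable_rpow_mul_exp_neg_mul_sq (b := (2 * σ ^ 2)⁻¹) (by positivity)
    (s := 2) (by norm_num)
  refine h.congr (ae_of_all _ fun x => ?_)
  norm_num [show ((2:ℝ):ℝ) = ((2:ℕ):ℝ) by norm_num]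


lemma integrable_poly_pdf0 {σ : ℝ} (hσ : 0 < σ) (a0 a1 a2 : ℝ) :
    Integrable (fun x : ℝ =>
      gaussianPDFReal 0 ⟨σ ^ 2, sq_nonneg σ⟩ x * (a0 + a1 * x + a2 * x ^ 2)) := by
  set c : ℝ := (Real.sqrt (2 * π * σ ^ 2))⁻¹ with hc
  have h0 : Integrable (fun x : ℝ => rexp (-(2 * σ ^ 2)⁻¹ * x ^ 2)) :=
    integrable_exp_neg_mul_sq (by positivity)
  have h := (((h0.const_mul (a0 * c)).add
      ((integrable_I1 hσ).const_mul (a1 * c))).add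
      ((integrable_I2 hσ).const_mul (a2 * c)))
  refine h.congr (ae_of_all _ fun x => ?_)
  simp only [Pi.add_apply]
  rw [pdf0_eq, ← hc]
  ring

lemma int_pdf0_poly {σ : ℝ} (hσ : 0 < σ) (a0 a1 a2 : ℝ) :
    ∫ x : ℝ, gaussianPDFReal 0 ⟨σ ^ 2, sq_nonneg σ⟩ x * (a0 + a1 * x + a2 * x ^ 2)
      = a0 + a2 * σ ^ 2 := by
  set c : ℝ := (Real.sqrt (2 * π * σ ^ 2))⁻¹ with hc
  set b : ℝ := (2 * σ ^ 2)⁻¹ with hb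
  have hbpos : 0 < b := by rw [hb]; positivity
  have hfun : (fun x : ℝ => gaussianPDFReal 0 ⟨σ ^ 2, sq_nonneg σ⟩ x * (a0 + a1 * x + a2 * x ^ 2))
      = fun x : ℝ => (a0 * c) * rexp (-b * x ^ 2)
        + ((a1 * c) * (x * rexp (-b * x ^ 2)) + (a2 * c) * (x ^ 2 * rexp (-b * x ^ 2))) := by
    funext x
    rw [pdf0_eq, ← hc, ← hb]
    ring
  have h0 : Integrable (fun x : ℝ => rexp (-b * x ^ 2)) := integrable_exp_neg_mul_sq hbpos
  have h1 : Integrable (fun x : ℝ => x * rexp (-b * x ^ 2)) := by rw [hb]; exact integrable_I1 hσ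
  have h2 : Integrable (fun x : ℝ => x ^ 2 * rexp (-b * x ^ 2)) := by
    rw [hb]; exact integrable_I2 hσ
  have hB : Integrable (fun x : ℝ =>
      (a1 * c) * (x * rexp (-b * x ^ 2)) + (a2 * c) * (x ^ 2 * rexp (-b * x ^ 2))) :=
    (h1.const_mul _).add (h2.const_mul _)
  rw [hfun, integral_add (h0.const_mul _) hB,
    integral_add (h1.const_mul _) (h2.const_mul _), integral_const_mul, integral_const_mul,
    integral_const_mul, integral_gaussian, integral_x_mul_exp, integral_x_sq_mul_exp hbpos]
  have hπb : π / b = 2 * π * σ ^ 2 := by rw [hb]; field_simp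
  have key1 : c * Real.sqrt (π / b) = 1 := by
    rw [hπb, hc, inv_mul_cancel₀ (by positivity)]
  have key2 : Real.sqrt (π / b) / (2 * b) = Real.sqrt (π / b) * σ ^ 2 := by
    rw [hb]
    field_simp
  rw [key2]
  linear_combination (a0 + a2 * σ ^ 2) * key1

lemma pdf_shift {σ : ℝ} (μ x : ℝ) :
    gaussianPDFReal μ ⟨σ ^ 2, sq_nonneg σ⟩ x
      = gaussianPDFReal 0 ⟨σ ^ 2, sq_nonneg σ⟩ (x - μ) := by
  have h := gaussianPDFReal_sub (μ := 0) (v := ⟨σ ^ 2, sq_nonneg σ⟩) x μ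
  rw [zero_add] at h
  exact h.symm

lemma integral_poly_gaussianReal (μ : ℝ) {σ : ℝ} (hσ : 0 < σ) (a0 a1 a2 : ℝ) :
    ∫ x : ℝ, (a0 + a1 * x + a2 * x ^ 2) ∂(gaussianReal μ ⟨σ ^ 2, sq_nonneg σ⟩)
      = (a0 + a1 * μ + a2 * μ ^ 2) + a2 * σ ^ 2 := by
  set v : NNReal := ⟨σ ^ 2, sq_nonneg σ⟩ with hv
  have hmeas : Measurable fun x : ℝ => (gaussianPDFReal μ v x).toNNReal :=
    (measurable_gaussianPDFReal _ _).real_toNNReal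
  have hd : gaussianReal μ v
      = volume.withDensity (fun x => ((gaussianPDFReal μ v x).toNNReal : ENNReal)) := by
    rw [gaussianReal_of_var_ne_zero _ (vne hσ)]
    rfl
  rw [hd, integral_withDensity_eq_integral_smul hmeas]
  have hfun : (fun x : ℝ => (gaussianPDFReal μ v x).toNNReal • (a0 + a1 * x + a2 * x ^ 2))
      = fun x : ℝ => (fun y : ℝ => gaussianPDFReal 0 v y
          * ((a0 + a1 * μ + a2 * μ ^ 2) + (a1 + 2 * a2 * μ) * y + a2 * y ^ 2)) (x - μ) := by
    funext x
    simp only [NNReal.smul_def, smul_eq_mul, Real.coe_toNNReal _ (gaussianPDFReal_nonneg _ _ _)]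
    rw [pdf_shift μ x]
    ring
  rw [hfun, integral_sub_right_eq_self (μ := volume) (fun y : ℝ => gaussianPDFReal 0 v y
      * ((a0 + a1 * μ + a2 * μ ^ 2) + (a1 + 2 * a2 * μ) * y + a2 * y ^ 2)) μ,
    hv, int_pdf0_poly hσ]

lemma integrable_poly_gaussianReal (μ : ℝ) {σ : ℝ} (hσ : 0 < σ) (a0 a1 a2 : ℝ) :
    Integrable (fun x : ℝ => a0 + a1 * x + a2 * x ^ 2)
      (gaussianReal μ ⟨σ ^ 2, sq_nonneg σ⟩) := by
  set v : NNReal := ⟨σ ^ 2, sq_nonneg σ⟩ with hv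
  have hmeas : Measurable fun x : ℝ => (gaussianPDFReal μ v x).toNNReal :=
    (measurable_gaussianPDFReal _ _).real_toNNReal
  have hd : gaussianReal μ v
      = volume.withDensity (fun x => ((gaussianPDFReal μ v x).toNNReal : ENNReal)) := by
    rw [gaussianReal_of_var_ne_zero _ (vne hσ)]
    rfl
  rw [hd, integrable_withDensity_iff_integrable_smul hmeas]
  have base := (integrable_poly_pdf0 hσ (a0 + a1 * μ + a2 * μ ^ 2) (a1 + 2 * a2 * μ) a2).comp_sub_right μ
  refine base.congr (ae_of_all _ fun x => ?_)
  simp only [NNReal.smul_def, smul_eq_mul, Real.coe_toNNReal _ (gaussianPDFReal_nonneg _ _ _)]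
  rw [← pdf_shift μ x]
  ring

lemma integral_affine_sq_prod (μ1 μ2 a b c : ℝ) {σ1 σ2 : ℝ} (h1 : 0 < σ1) (h2 : 0 < σ2) :
    ∫ p : ℝ × ℝ, (a * p.1 + b * p.2 + c) ^ 2
        ∂((gaussianReal μ1 ⟨σ1 ^ 2, sq_nonneg σ1⟩).prod
            (gaussianReal μ2 ⟨σ2 ^ 2, sq_nonneg σ2⟩))
      = a ^ 2 * (σ1 ^ 2 + μ1 ^ 2) + b ^ 2 * (σ2 ^ 2 + μ2 ^ 2) + c ^ 2
        + 2 * a * b * μ1 * μ2 + 2 * a * c * μ1 + 2 * b * c * μ2 := by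
  haveI : IsProbabilityMeasure (gaussianReal μ1 ⟨σ1 ^ 2, sq_nonneg σ1⟩) :=
    instIsProbabilityMeasureGaussianReal _ _
  haveI : IsProbabilityMeasure (gaussianReal μ2 ⟨σ2 ^ 2, sq_nonneg σ2⟩) :=
    instIsProbabilityMeasureGaussianReal _ _
  have hf1 : Integrable (fun x : ℝ => (a * x + c) ^ 2)
      (gaussianReal μ1 ⟨σ1 ^ 2, sq_nonneg σ1⟩) :=
    (integrable_poly_gaussianReal μ1 h1 (c ^ 2) (2 * a * c) (a ^ 2)).congr
      (ae_of_all _ fun x => by ring)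
  have hf2 : Integrable (fun x : ℝ => 2 * b * (a * x + c))
      (gaussianReal μ1 ⟨σ1 ^ 2, sq_nonneg σ1⟩) :=
    (integrable_poly_gaussianReal μ1 h1 (2 * b * c) (2 * b * a) 0).congr
      (ae_of_all _ fun x => by ring)
  have hf3 : Integrable (fun _ : ℝ => (b ^ 2 : ℝ))
      (gaussianReal μ1 ⟨σ1 ^ 2, sq_nonneg σ1⟩) := integrable_const _
  have hg1 : Integrable (fun _ : ℝ => (1 : ℝ))
      (gaussianReal μ2 ⟨σ2 ^ 2, sq_nonneg σ2⟩) := integrable_const _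
  have hg2 : Integrable (fun y : ℝ => y)
      (gaussianReal μ2 ⟨σ2 ^ 2, sq_nonneg σ2⟩) :=
    (integrable_poly_gaussianReal μ2 h2 0 1 0).congr (ae_of_all _ fun x => by ring)
  have hg3 : Integrable (fun y : ℝ => y ^ 2)
      (gaussianReal μ2 ⟨σ2 ^ 2, sq_nonneg σ2⟩) :=
    (integrable_poly_gaussianReal μ2 h2 0 0 1).congr (ae_of_all _ fun x => by ring)
  have hI1 : Integrable (fun p : ℝ × ℝ => (a * p.1 + c) ^ 2 * (1 : ℝ))
      ((gaussianReal μ1 ⟨σ1 ^ 2, sq_nonneg σ1⟩).prod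
        (gaussianReal μ2 ⟨σ2 ^ 2, sq_nonneg σ2⟩)) := hf1.mul_prod hg1
  have hI2 : Integrable (fun p : ℝ × ℝ => (2 * b * (a * p.1 + c)) * p.2)
      ((gaussianReal μ1 ⟨σ1 ^ 2, sq_nonneg σ1⟩).prod
        (gaussianReal μ2 ⟨σ2 ^ 2, sq_nonneg σ2⟩)) := hf2.mul_prod hg2
  have hI3 : Integrable (fun p : ℝ × ℝ => (b ^ 2) * p.2 ^ 2)
      ((gaussianReal μ1 ⟨σ1 ^ 2, sq_nonneg σ1⟩).prod
        (gaussianReal μ2 ⟨σ2 ^ 2, sq_nonneg σ2⟩)) := hf3.mul_prod hg3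
  have hI23 : Integrable (fun p : ℝ × ℝ =>
      (2 * b * (a * p.1 + c)) * p.2 + (b ^ 2) * p.2 ^ 2)
      ((gaussianReal μ1 ⟨σ1 ^ 2, sq_nonneg σ1⟩).prod
        (gaussianReal μ2 ⟨σ2 ^ 2, sq_nonneg σ2⟩)) := hI2.add hI3
  have e1 : ∫ x, (a * x + c) ^ 2 ∂(gaussianReal μ1 ⟨σ1 ^ 2, sq_nonneg σ1⟩)
      = (c ^ 2 + 2 * a * c * μ1 + a ^ 2 * μ1 ^ 2) + a ^ 2 * σ1 ^ 2 := by
    rw [show (fun x : ℝ => (a * x + c) ^ 2)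
        = fun x : ℝ => c ^ 2 + (2 * a * c) * x + a ^ 2 * x ^ 2 from funext fun x => by ring]
    exact integral_poly_gaussianReal μ1 h1 (c ^ 2) (2 * a * c) (a ^ 2)
  have e2 : ∫ x, 2 * b * (a * x + c) ∂(gaussianReal μ1 ⟨σ1 ^ 2, sq_nonneg σ1⟩)
      = 2 * b * (a * μ1 + c) := by
    rw [show (fun x : ℝ => 2 * b * (a * x + c))
        = fun x : ℝ => (2 * b * c) + (2 * b * a) * x + 0 * x ^ 2 from funext fun x => by ring]
    rw [integral_poly_gaussianReal μ1 h1 (2 * b * c) (2 * b * a) 0]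
    ring
  have e3 : ∫ _ : ℝ, (b ^ 2 : ℝ) ∂(gaussianReal μ1 ⟨σ1 ^ 2, sq_nonneg σ1⟩) = b ^ 2 := by
    simp
  have e4 : ∫ _ : ℝ, (1 : ℝ) ∂(gaussianReal μ2 ⟨σ2 ^ 2, sq_nonneg σ2⟩) = 1 := by simp
  have e5 : ∫ y, y ∂(gaussianReal μ2 ⟨σ2 ^ 2, sq_nonneg σ2⟩) = μ2 := by
    rw [show (fun y : ℝ => y) = fun y : ℝ => 0 + 1 * y + 0 * y ^ 2 from funext fun y => by ring]
    rw [integral_poly_gaussianReal μ2 h2 0 1 0]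
    ring
  have e6 : ∫ y, y ^ 2 ∂(gaussianReal μ2 ⟨σ2 ^ 2, sq_nonneg σ2⟩) = σ2 ^ 2 + μ2 ^ 2 := by
    rw [show (fun y : ℝ => y ^ 2) = fun y : ℝ => 0 + 0 * y + 1 * y ^ 2 from
      funext fun y => by ring]
    rw [integral_poly_gaussianReal μ2 h2 0 0 1]
    ring
  calc ∫ p : ℝ × ℝ, (a * p.1 + b * p.2 + c) ^ 2
        ∂((gaussianReal μ1 ⟨σ1 ^ 2, sq_nonneg σ1⟩).prod
            (gaussianReal μ2 ⟨σ2 ^ 2, sq_nonneg σ2⟩))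
      = ∫ p : ℝ × ℝ, ((a * p.1 + c) ^ 2 * (1 : ℝ)
          + ((2 * b * (a * p.1 + c)) * p.2 + (b ^ 2) * p.2 ^ 2))
        ∂((gaussianReal μ1 ⟨σ1 ^ 2, sq_nonneg σ1⟩).prod
            (gaussianReal μ2 ⟨σ2 ^ 2, sq_nonneg σ2⟩)) := by
        congr 1
        funext p
        ring
    _ = (∫ x, (a * x + c) ^ 2 ∂(gaussianReal μ1 ⟨σ1 ^ 2, sq_nonneg σ1⟩))
          * (∫ _ : ℝ, (1 : ℝ) ∂(gaussianReal μ2 ⟨σ2 ^ 2, sq_nonneg σ2⟩))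
        + ((∫ x, 2 * b * (a * x + c) ∂(gaussianReal μ1 ⟨σ1 ^ 2, sq_nonneg σ1⟩))
            * (∫ y, y ∂(gaussianReal μ2 ⟨σ2 ^ 2, sq_nonneg σ2⟩))
          + (∫ _ : ℝ, (b ^ 2 : ℝ) ∂(gaussianReal μ1 ⟨σ1 ^ 2, sq_nonneg σ1⟩))
            * (∫ y, y ^ 2 ∂(gaussianReal μ2 ⟨σ2 ^ 2, sq_nonneg σ2⟩))) := by
        rw [integral_add hI1 hI23, integral_add hI2 hI3,
          integral_prod_mul (f := fun x : ℝ => (a * x + c) ^ 2) (g := fun _ : ℝ => (1 : ℝ)),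
          integral_prod_mul (f := fun x : ℝ => 2 * b * (a * x + c)) (g := fun y : ℝ => y),
          integral_prod_mul (f := fun _ : ℝ => (b ^ 2 : ℝ)) (g := fun y : ℝ => y ^ 2)]
    _ = a ^ 2 * (σ1 ^ 2 + μ1 ^ 2) + b ^ 2 * (σ2 ^ 2 + μ2 ^ 2) + c ^ 2
        + 2 * a * b * μ1 * μ2 + 2 * a * c * μ1 + 2 * b * c * μ2 := by
        rw [e1, e2, e3, e4, e5, e6]
        ring

end Stmt14Aux

lemma integral_affine_sq_prod0 (μ1 a b c : ℝ) {σ1 σ2 : ℝ} (h1 : 0 < σ1) (h2 : 0 < σ2) :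
    ∫ p : ℝ × ℝ, (a * p.1 + b * p.2 + c) ^ 2
        ∂((gaussianReal μ1 ⟨σ1 ^ 2, sq_nonneg σ1⟩).prod
            (gaussianReal 0 ⟨σ2 ^ 2, sq_nonneg σ2⟩)) =
      a ^ 2 * (σ1 ^ 2 + μ1 ^ 2) + b ^ 2 * σ2 ^ 2 + c ^ 2 + 2 * a * c * μ1 := by
  rw [Stmt14Aux.integral_affine_sq_prod μ1 0 a b c h1 h2]
  ring

set_option maxHeartbeats 800000 in
theorem stmt14 (σe σd σW μe μd Pbar : ℝ)
    (hσe : 0 < σe) (hσd : 0 < σd) (hσW : 0 < σW) (hP : 0 < Pbar) :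
    let δ : ℝ := μe - μd
    let A : ℝ := Real.sqrt (Pbar / (δ ^ 2 + σe ^ 2))
    let C : ℝ := -A * μd
    let K : ℝ := A * σd ^ 2 / (A ^ 2 * σd ^ 2 + σW ^ 2)
    let L : ℝ := μd
    let U : ℝ × ℝ → ℝ := fun p => K * (A * p.1 + C + p.2) + L
    (∫ p, (p.1 - U p) ^ 2
        ∂((gaussianReal μe ⟨σe ^ 2, sq_nonneg σe⟩).prod
            (gaussianReal 0 ⟨σW ^ 2, sq_nonneg σW⟩))
      = σW ^ 2 * (Pbar * σd ^ 4 / (δ ^ 2 + σe ^ 2) + (δ ^ 2 + σe ^ 2) * σW ^ 2)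
          / (Pbar * σd ^ 2 / (δ ^ 2 + σe ^ 2) + σW ^ 2) ^ 2)
    ∧ (∫ p, (p.1 - U p) ^ 2
        ∂((gaussianReal μd ⟨σd ^ 2, sq_nonneg σd⟩).prod
            (gaussianReal 0 ⟨σW ^ 2, sq_nonneg σW⟩))
      = σd ^ 2 * σW ^ 2 / (Pbar * σd ^ 2 / (δ ^ 2 + σe ^ 2) + σW ^ 2)) := by
  intro δ A C K L U
  have hδ : δ = μe - μd := rfl
  have hA : A = Real.sqrt (Pbar / (δ ^ 2 + σe ^ 2)) := rfl
  have hC : C = -A * μd := rfl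
  have hK : K = A * σd ^ 2 / (A ^ 2 * σd ^ 2 + σW ^ 2) := rfl
  have hL : L = μd := rfl
  have hS : 0 < δ ^ 2 + σe ^ 2 := by positivity
  have hA2 : A ^ 2 = Pbar / (δ ^ 2 + σe ^ 2) := by
    rw [hA]; exact Real.sq_sqrt (by positivity)
  have hKA : K * A = A ^ 2 * σd ^ 2 / (A ^ 2 * σd ^ 2 + σW ^ 2) := by rw [hK]; ring
  have hK2 : K ^ 2 = A ^ 2 * σd ^ 4 / (A ^ 2 * σd ^ 2 + σW ^ 2) ^ 2 := by
    rw [hK, div_pow]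
    congr 1
    ring
  have hne1 : (δ ^ 2 + σe ^ 2) ≠ 0 := hS.ne'
  have hne2 : Pbar * σd ^ 2 / (δ ^ 2 + σe ^ 2) + σW ^ 2 ≠ 0 := by positivity
  have hne3 : Pbar / (δ ^ 2 + σe ^ 2) * σd ^ 2 + σW ^ 2 ≠ 0 := by positivity
  have hInt : (fun p : ℝ × ℝ => (p.1 - U p) ^ 2)
      = fun p : ℝ × ℝ =>
        ((1 - K * A) * p.1 + (-K) * p.2 + (K * A * μd - μd)) ^ 2 := by
    funext p
    show (p.1 - (K * (A * p.1 + C + p.2) + L)) ^ 2 = _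
    rw [hC, hL]
    ring
  have hD : A ^ 2 * σd ^ 2 + σW ^ 2 ≠ 0 := by positivity
  have ha : 1 - K * A = σW ^ 2 / (A ^ 2 * σd ^ 2 + σW ^ 2) := by
    rw [hKA]
    field_simp
    ring
  have E : ∀ μ1 σ1 : ℝ,
      (1 - K * A) ^ 2 * (σ1 ^ 2 + μ1 ^ 2) + K ^ 2 * σW ^ 2 + (K * A * μd - μd) ^ 2
          + 2 * (1 - K * A) * (K * A * μd - μd) * μ1
        = (1 - K * A) ^ 2 * ((μ1 - μd) ^ 2 + σ1 ^ 2) + K ^ 2 * σW ^ 2 :=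
    fun μ1 σ1 => by ring
  constructor
  · rw [hInt, integral_affine_sq_prod0 μe (1 - K * A) (-K) (K * A * μd - μd) hσe hσW,
      neg_sq, E μe σe, ha, hK2, hA2, ← hδ]
    field_simp
    ring
  · rw [hInt, integral_affine_sq_prod0 μd (1 - K * A) (-K) (K * A * μd - μd) hσd hσW,
      neg_sq, E μd σd, ha, hK2, hA2]
    field_simp
    ring
end
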